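/- arXiv:1506.02234 — 8 statements merged into one kernel-verified Lean document; each statement's English description precedes it below -/
import Mathlib

section
/- Let p be a prime, let s > 1 be an integer with deg_p(s−1) = ℓ > 1, and let x > 0 be an integer with deg_p(x) = u > 0. If p ≠ 2 then [x]_s ≡ x (mod p^{ℓ+u}), and if p = 2 then [x]_s ≡ (1 + 2^{ℓ−1})·x (mod 2^{ℓ+u}). -/
/-- The geometric sum `[k]_s = 1 + s + s^2 + ⋯ + s^(k-1)`, with `[0]_s = 0`. -/
def geomS (s : ℤ) (k : ℕ) : ℤ := ∑ i ∈ Finset.range k, s ^ i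

lemma aux_lt (p ℓ k : ℕ) (hp : 2 ≤ p) (hℓ : 2 ≤ ℓ) (hk : 2 ≤ k)
    (h : 3 ≤ p ∨ 3 ≤ k) : k < p ^ ((k - 2) * ℓ + 1) := by
  rcases Nat.lt_or_ge k 3 with h3 | h3
  · have hk2 : k = 2 := by omega
    subst hk2
    have hp3 : 3 ≤ p := by rcases h with h | h <;> omega
    simpa using (by omega : 2 < p)
  · calc k < 2 ^ k := (Nat.lt_two_pow_self (n := k))
      _ ≤ 2 ^ ((k - 2) * ℓ + 1) := by
          apply Nat.pow_le_pow_right (by norm_num)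
          have : (k - 2) * 2 ≤ (k - 2) * ℓ := Nat.mul_le_mul_left _ hℓ
          omega
      _ ≤ p ^ ((k - 2) * ℓ + 1) := Nat.pow_le_pow_left hp _

lemma choose_mul_eq (x k : ℕ) (hx : 1 ≤ x) (hk : 1 ≤ k) :
    x * (x - 1).choose (k - 1) = x.choose k * k := by
  have := Nat.add_one_mul_choose_eq (x - 1) (k - 1)
  have h1 : x - 1 + 1 = x := by omega
  have h2 : k - 1 + 1 = k := by omega
  rwa [h1, h2] at this

lemma term_dvd (p : ℕ) (hp : p.Prime) (ℓ u x k : ℕ) (hℓ : 2 ≤ ℓ) (a : ℤ)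
    (ha : (p : ℤ) ^ ℓ ∣ a) (hxd : p ^ u ∣ x) (hk2 : 2 ≤ k)
    (hodd : p ≠ 2 ∨ 3 ≤ k) :
    (p : ℤ) ^ (u + 2 * ℓ) ∣ (x.choose k : ℤ) * a ^ k := by
  rcases Nat.eq_zero_or_pos x with rfl | hx
  · simp [Nat.choose_eq_zero_of_lt (by omega : 0 < k)]
  set v := k.factorization p with hv
  set k' := k / p ^ v with hk'
  have hkeq : p ^ v * k' = k := Nat.ordProj_mul_ordCompl_eq_self k p
  have hndvd : ¬ p ∣ k' := Nat.not_dvd_ordCompl hp (by omega)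
  have hple : p ^ v ≤ k := Nat.le_of_dvd (by omega) (Nat.ordProj_dvd k p)
  have hklt : k < p ^ ((k - 2) * ℓ + 1) := by
    apply aux_lt p ℓ k hp.two_le hℓ hk2
    rcases hodd with h | h
    · left
      rcases hp.two_le.lt_or_eq with h' | h'
      · omega
      · exact absurd h'.symm h
    · exact Or.inr h
  have hvle : v ≤ (k - 2) * ℓ := by
    by_contra hcon
    have : p ^ ((k - 2) * ℓ + 1) ≤ p ^ v := Nat.pow_le_pow_right hp.one_lt.le (by omega)
    omega
  have hsub : (k - 2) * ℓ + 2 * ℓ = k * ℓ := by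
    rw [← Nat.add_mul]
    congr 1
    omega
  -- p^u ∣ choose x k * k
  have hdvd1 : p ^ u ∣ x.choose k * k :=
    dvd_trans hxd ⟨_, (choose_mul_eq x k (by omega) (by omega)).symm⟩
  have hdvd2 : (p : ℤ) ^ (u + k * ℓ) ∣ (x.choose k : ℤ) * (k : ℤ) * a ^ k := by
    rw [pow_add]
    apply mul_dvd_mul
    · exact_mod_cast Int.natCast_dvd_natCast.mpr hdvd1
    · rw [mul_comm k ℓ, pow_mul]
      exact pow_dvd_pow_of_dvd ha k
  have hkeqZ : (k : ℤ) = (p : ℤ) ^ v * (k' : ℤ) := by exact_mod_cast hkeq.symm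
  have hvle' : v ≤ u + k * ℓ := by omega
  have hdvd3 : (p : ℤ) ^ v * (p : ℤ) ^ (u + k * ℓ - v) ∣
      (p : ℤ) ^ v * ((x.choose k : ℤ) * (k' : ℤ) * a ^ k) := by
    rw [← pow_add]
    have : v + (u + k * ℓ - v) = u + k * ℓ := by omega
    rw [this]
    calc (p : ℤ) ^ (u + k * ℓ) ∣ (x.choose k : ℤ) * (k : ℤ) * a ^ k := hdvd2
      _ = (p : ℤ) ^ v * ((x.choose k : ℤ) * (k' : ℤ) * a ^ k) := by rw [hkeqZ]; ring
  have hdvd4 : (p : ℤ) ^ (u + k * ℓ - v) ∣ (x.choose k : ℤ) * (k' : ℤ) * a ^ k :=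
    (mul_dvd_mul_iff_left (pow_ne_zero v (by exact_mod_cast hp.ne_zero))).mp hdvd3
  have hcop : IsCoprime ((p : ℤ) ^ (u + k * ℓ - v)) ((k' : ℤ)) := by
    apply IsCoprime.pow_left
    exact Nat.isCoprime_iff_coprime.mpr ((Nat.Prime.coprime_iff_not_dvd hp).mpr hndvd)
  have hdvd5 : (p : ℤ) ^ (u + k * ℓ - v) ∣ (x.choose k : ℤ) * a ^ k := by
    apply hcop.dvd_of_dvd_mul_right
    calc (p:ℤ) ^ (u + k * ℓ - v) ∣ (x.choose k : ℤ) * (k' : ℤ) * a ^ k := hdvd4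
      _ = (x.choose k : ℤ) * a ^ k * (k' : ℤ) := by ring
  exact dvd_trans (pow_dvd_pow _ (by omega : u + 2 * ℓ ≤ u + k * ℓ - v)) hdvd5

lemma cancel_lemma (q : ℤ) (hq : Prime q) (ℓ m : ℕ) (a D : ℤ)
    (h1 : q ^ ℓ ∣ a) (h2 : ¬ q ^ (ℓ + 1) ∣ a) (h : q ^ (ℓ + m) ∣ a * D) :
    q ^ m ∣ D := by
  obtain ⟨t, ht⟩ := h1
  have hnd : ¬ q ∣ t := by
    intro ⟨w, hw⟩
    exact h2 ⟨w, by rw [ht, hw, pow_succ]; ring⟩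
  have h3 : q ^ ℓ * q ^ m ∣ q ^ ℓ * (t * D) := by
    rw [← pow_add]
    calc q ^ (ℓ + m) ∣ a * D := h
      _ = q ^ ℓ * (t * D) := by rw [ht]; ring
  have h4 : q ^ m ∣ t * D :=
    (mul_dvd_mul_iff_left (pow_ne_zero ℓ hq.ne_zero)).mp h3
  have hco : IsCoprime (q ^ m) t := (hq.coprime_iff_not_dvd.mpr hnd).pow_left
  exact hco.dvd_of_dvd_mul_left h4

theorem stmt_0 (p : ℕ) (hp : p.Prime) (s : ℤ) (hs : 1 < s)
    (ℓ : ℕ) (hℓ : 1 < ℓ)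
    (hℓ1 : (p : ℤ) ^ ℓ ∣ s - 1) (hℓ2 : ¬ (p : ℤ) ^ (ℓ + 1) ∣ s - 1)
    (x : ℕ) (hx : 0 < x) (u : ℕ) (hu : 0 < u)
    (hu1 : p ^ u ∣ x) (hu2 : ¬ p ^ (u + 1) ∣ x) :
    (p ≠ 2 → geomS s x ≡ (x : ℤ) [ZMOD (p : ℤ) ^ (ℓ + u)]) ∧
    (p = 2 → geomS s x ≡ (1 + 2 ^ (ℓ - 1)) * (x : ℤ) [ZMOD (2 : ℤ) ^ (ℓ + u)]) := by
  set a : ℤ := s - 1 with ha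
  have hpx : p ∣ x := dvd_trans (dvd_pow_self p hu.ne') hu1
  have hx2 : 2 ≤ x := le_trans hp.two_le (Nat.le_of_dvd hx hpx)
  -- binomial expansion
  have hbin : s ^ x = ∑ m ∈ Finset.range (x + 1), a ^ m * (x.choose m : ℤ) := by
    have : s = a + 1 := by ring
    rw [this, add_pow]
    simp
  have hsplit : s ^ x - 1 - (x : ℤ) * a =
      ∑ m ∈ Finset.Ico 2 (x + 1), a ^ m * (x.choose m : ℤ) := by
    rw [hbin, Finset.range_eq_Ico,
      Finset.sum_eq_sum_Ico_succ_bot (by omega : 0 < x + 1),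
      Finset.sum_eq_sum_Ico_succ_bot (by omega : 1 < x + 1)]
    simp [mul_comm]
  have hgeom : geomS s x * a = s ^ x - 1 := by
    rw [geomS, ha]
    exact geom_sum_mul s x
  have hqprime : Prime ((p : ℤ)) := Nat.prime_iff_prime_int.mp hp
  constructor
  · intro hodd
    have hsum : (p : ℤ) ^ (u + 2 * ℓ) ∣ s ^ x - 1 - (x : ℤ) * a := by
      rw [hsplit]
      apply Finset.dvd_sum
      intro k hk
      rw [Finset.mem_Ico] at hk
      rw [show a ^ k * (x.choose k : ℤ) = (x.choose k : ℤ) * a ^ k from mul_comm _ _]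
      exact term_dvd p hp ℓ u x k hℓ a hℓ1 hu1 hk.1 (Or.inl hodd)
    have hmain : (p : ℤ) ^ (ℓ + (ℓ + u)) ∣ a * (geomS s x - (x : ℤ)) := by
      have heq : a * (geomS s x - (x : ℤ)) = s ^ x - 1 - (x : ℤ) * a := by
        rw [← hgeom]; ring
      rw [heq]
      exact dvd_trans (pow_dvd_pow _ (by omega)) hsum
    have := cancel_lemma (p : ℤ) hqprime ℓ (ℓ + u) a _ hℓ1 hℓ2 hmain
    exact Int.modEq_iff_dvd.mpr (by simpa using (dvd_neg.mpr this))
  · intro h2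
    subst h2
    have h2Z : ((2 : ℕ) : ℤ) = (2 : ℤ) := by norm_num
    rw [h2Z] at hℓ1 hℓ2 hqprime
    -- split off the k = 2 term
    have hsplit2 : s ^ x - 1 - (x : ℤ) * a =
        a ^ 2 * (x.choose 2 : ℤ) + ∑ m ∈ Finset.Ico 3 (x + 1), a ^ m * (x.choose m : ℤ) := by
      rw [hsplit, Finset.sum_eq_sum_Ico_succ_bot (by omega : 2 < x + 1)]
    -- the correction term
    obtain ⟨t, ht⟩ := hℓ1
    have htodd : ¬ (2 : ℤ) ∣ t := by
      intro ⟨w, hw⟩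
      exact hℓ2 ⟨w, by rw [ht, hw, pow_succ]; ring⟩
    obtain ⟨d, hd⟩ : ∃ d, t = 2 * d + 1 := by
      rcases Int.even_or_odd t with he | ⟨d, hd⟩
      · exact absurd he.two_dvd htodd
      · exact ⟨d, hd⟩
    obtain ⟨m, hm⟩ := hu1
    have hmZ : (x : ℤ) = 2 ^ u * (m : ℤ) := by exact_mod_cast hm
    obtain ⟨c, hc⟩ : ∃ c, (x : ℤ) = 2 * c := ⟨2 ^ (u - 1) * m, by
      rw [hmZ]
      have : (2 : ℤ) ^ u = 2 * 2 ^ (u - 1) := by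
        rw [← pow_succ']
        congr 1
        omega
      rw [this]; ring⟩
    have hw : ((x : ℤ) - 1) * t - 1 = 2 * (2 * c * d + c - d - 1) := by
      rw [hc, hd]; ring
    have hchoose2 : 2 * (x.choose 2 : ℤ) = (x : ℤ) * ((x : ℤ) - 1) := by
      have := choose_mul_eq x 2 (by omega) (by omega)
      have hN : (x * (x - 1).choose 1 : ℕ) = (x.choose 2 * 2 : ℕ) := this
      have hc1 : ((x - 1).choose 1 : ℕ) = x - 1 := Nat.choose_one_right _
      rw [hc1] at hN
      have hx1 : ((x - 1 : ℕ) : ℤ) = (x : ℤ) - 1 := by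
        have : (1 : ℕ) ≤ x := by omega
        push_cast [this]
        ring
      have := congrArg (fun n : ℕ => (n : ℤ)) hN
      push_cast at this
      rw [hx1] at this
      linarith
    have hpow : (2 : ℤ) ^ (ℓ - 1) * 2 = 2 ^ ℓ := by
      rw [← pow_succ]
      congr 1
      omega
    -- 2^(u+2ℓ) divides the corrected k=2 term
    have hcorr : (2 : ℤ) ^ (u + 2 * ℓ) ∣
        a ^ 2 * (x.choose 2 : ℤ) - 2 ^ (ℓ - 1) * (x : ℤ) * a := by
      refine ⟨(m : ℤ) * t * (2 * c * d + c - d - 1), ?_⟩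
      have key : 2 * (a ^ 2 * (x.choose 2 : ℤ) - 2 ^ (ℓ - 1) * (x : ℤ) * a) =
          2 * ((2 : ℤ) ^ (u + 2 * ℓ) * ((m : ℤ) * t * (2 * c * d + c - d - 1))) := by
        calc 2 * (a ^ 2 * (x.choose 2 : ℤ) - 2 ^ (ℓ - 1) * (x : ℤ) * a)
            = (2 * (x.choose 2 : ℤ)) * a ^ 2 - (2 ^ (ℓ - 1) * 2) * (x : ℤ) * a := by ring
          _ = (x : ℤ) * ((x : ℤ) - 1) * a ^ 2 - 2 ^ ℓ * (x : ℤ) * a := by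
              rw [hchoose2, hpow]
          _ = (x : ℤ) * a * (2 ^ ℓ * (((x : ℤ) - 1) * t - 1)) := by
              rw [ht]; ring
          _ = (2 ^ u * (m : ℤ)) * (2 ^ ℓ * t) * (2 ^ ℓ * (2 * (2 * c * d + c - d - 1))) := by
              rw [← hmZ, ← ht, ← hw]
          _ = 2 * ((2 : ℤ) ^ (u + 2 * ℓ) * ((m : ℤ) * t * (2 * c * d + c - d - 1))) := by
              have hpw : (2 : ℤ) ^ (u + 2 * ℓ) = 2 ^ u * (2 ^ ℓ * 2 ^ ℓ) := by
                rw [pow_add]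
                rw [two_mul]
                rw [pow_add]
              rw [hpw]; ring
      exact mul_left_cancel₀ (by norm_num) key
    have hsum : (2 : ℤ) ^ (u + 2 * ℓ) ∣
        s ^ x - 1 - (x : ℤ) * a - 2 ^ (ℓ - 1) * (x : ℤ) * a := by
      have heq : s ^ x - 1 - (x : ℤ) * a - 2 ^ (ℓ - 1) * (x : ℤ) * a =
          (a ^ 2 * (x.choose 2 : ℤ) - 2 ^ (ℓ - 1) * (x : ℤ) * a) +
          ∑ k ∈ Finset.Ico 3 (x + 1), a ^ k * (x.choose k : ℤ) := by
        rw [show s ^ x - 1 - (x : ℤ) * a - 2 ^ (ℓ - 1) * (x : ℤ) * a =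
          (s ^ x - 1 - (x : ℤ) * a) - 2 ^ (ℓ - 1) * (x : ℤ) * a by ring, hsplit2]
        ring
      rw [heq]
      apply dvd_add hcorr
      apply Finset.dvd_sum
      intro k hk
      rw [Finset.mem_Ico] at hk
      have := term_dvd 2 hp ℓ u x k hℓ a (by push_cast; exact ⟨t, ht⟩) ⟨m, hm⟩
        (by omega) (Or.inr hk.1)
      rw [show a ^ k * (x.choose k : ℤ) = (x.choose k : ℤ) * a ^ k from mul_comm _ _]
      exact_mod_cast this
    have hmain : (2 : ℤ) ^ (ℓ + (ℓ + u)) ∣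
        a * (geomS s x - (1 + 2 ^ (ℓ - 1)) * (x : ℤ)) := by
      have heq : a * (geomS s x - (1 + 2 ^ (ℓ - 1)) * (x : ℤ)) =
          s ^ x - 1 - (x : ℤ) * a - 2 ^ (ℓ - 1) * (x : ℤ) * a := by
        rw [← hgeom]; ring
      rw [heq]
      exact dvd_trans (pow_dvd_pow _ (by omega)) hsum
    have := cancel_lemma (2 : ℤ) hqprime ℓ (ℓ + u) a _ ⟨t, ht⟩ hℓ2 hmain
    exact Int.modEq_iff_dvd.mpr (by simpa using (dvd_neg.mpr this))
end

section
/- Let p be a prime, let s > 1 be an integer with deg_p(s−1) = ℓ > 1, and let x > 0 be an integer with deg_p(x) = u > 0. If p ≠ 2 then s^x − 1 ≡ (s−1)·x (mod p^{2ℓ+u}), and if p = 2 then s^x − 1 ≡ (s−1+2^{2ℓ−1})·x (mod 2^{2ℓ+u}). -/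
-- p^(u - v_p(k)) divides choose x k when p^u ∣ x
lemma aux_choose_dvd (p : ℕ) (hp : p.Prime) (u x k : ℕ) (hx : 0 < x) (hk : 0 < k)
    (hkx : k ≤ x) (hux : p ^ u ∣ x) :
    p ^ (u - k.factorization p) ∣ x.choose k := by
  set v := k.factorization p with hv
  rcases le_or_gt u v with h | h
  · simp [Nat.sub_eq_zero_of_le h]
  have h1 : x * (x - 1).choose (k - 1) = x.choose k * k := by
    have := Nat.add_one_mul_choose_eq (x - 1) (k - 1)
    have e1 : x - 1 + 1 = x := by omega
    have e2 : k - 1 + 1 = k := by omega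
    rwa [e1, e2] at this
  have hdvd : p ^ u ∣ x.choose k * k := h1 ▸ Dvd.dvd.mul_right hux _
  have hsplit : p ^ v * (k / p ^ v) = k := Nat.ordProj_mul_ordCompl_eq_self k p
  have hcop : Nat.Coprime (p ^ u) (k / p ^ v) :=
    Nat.Coprime.pow_left _ ((Nat.Prime.coprime_iff_not_dvd hp).mpr
      (Nat.not_dvd_ordCompl hp hk.ne'))
  have hdvd2 : p ^ u ∣ x.choose k * p ^ v * (k / p ^ v) := by
    rwa [mul_assoc, hsplit]
  have hdvd3 : p ^ u ∣ x.choose k * p ^ v := hcop.dvd_of_dvd_mul_right hdvd2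
  have hdvd4 : p ^ (u - v) * p ^ v ∣ x.choose k * p ^ v := by
    rw [← pow_add]
    have : u - v + v = u := by omega
    rwa [this]
  exact (Nat.mul_dvd_mul_iff_right (Nat.pow_pos (n := v) hp.pos)).mp hdvd4

lemma aux_fact_le (p k : ℕ) (hp : p.Prime) (hk : 1 ≤ k) : k.factorization p ≤ k - 1 := by
  set v := k.factorization p with hv
  have h1 : p ^ v ≤ k := Nat.ordProj_le p (by omega)
  have h2 : 2 ^ v ≤ p ^ v := Nat.pow_le_pow_left hp.two_le v
  have h3 : v < 2 ^ v := Nat.lt_two_pow_self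
  omega

-- the generic term divisibility
lemma aux_termA (p : ℕ) (hp : p.Prime) (t : ℤ) (ℓ : ℕ) (hℓ : 2 ≤ ℓ)
    (hℓ1 : (p : ℤ) ^ ℓ ∣ t) (x u k : ℕ) (hx : 0 < x) (hux : p ^ u ∣ x)
    (hk : 2 ≤ k) (hkx : k ≤ x) (hk2 : p = 2 → 3 ≤ k) :
    (p : ℤ) ^ (2 * ℓ + u) ∣ t ^ k * (x.choose k : ℤ) := by
  set v := k.factorization p with hv
  have hvk : v ≤ k - 1 := aux_fact_le p k hp (by omega)
  have hv2 : 2 * ℓ + v ≤ k * ℓ := by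
    rcases Nat.lt_or_ge k 3 with h3 | h3
    · -- k = 2, p ≠ 2
      have hk2' : k = 2 := by omega
      have hp2 : p ≠ 2 := fun h2 => by have := hk2 h2; omega
      have hv0 : v = 0 := by
        rw [hv, hk2']
        apply Nat.factorization_eq_zero_of_not_dvd
        intro hdvd
        have := (Nat.prime_dvd_prime_iff_eq hp Nat.prime_two).mp hdvd
        exact hp2 this
      subst hk2'
      omega
    · -- k ≥ 3
      have h4 : (k - 2) * 2 ≤ (k - 2) * ℓ := Nat.mul_le_mul_left _ hℓ
      have h5 : k * ℓ = (k - 2) * ℓ + 2 * ℓ := by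
        have : k - 2 + 2 = k := by omega
        calc k * ℓ = (k - 2 + 2) * ℓ := by rw [this]
          _ = (k - 2) * ℓ + 2 * ℓ := by ring
      omega
  have h1 : (p : ℤ) ^ (k * ℓ) ∣ t ^ k := by
    have := pow_dvd_pow_of_dvd hℓ1 k
    rwa [← pow_mul, mul_comm ℓ k] at this
  have h2 : (p : ℤ) ^ (u - v) ∣ (x.choose k : ℤ) := by
    exact_mod_cast Int.natCast_dvd_natCast.mpr (aux_choose_dvd p hp u x k hx (by omega) hkx hux)
  have h3 : (p : ℤ) ^ (2 * ℓ + u) ∣ (p : ℤ) ^ (k * ℓ + (u - v)) := by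
    apply pow_dvd_pow
    omega
  calc (p : ℤ) ^ (2 * ℓ + u) ∣ (p : ℤ) ^ (k * ℓ + (u - v)) := h3
    _ = (p : ℤ) ^ (k * ℓ) * (p : ℤ) ^ (u - v) := pow_add _ _ _
    _ ∣ t ^ k * (x.choose k : ℤ) := mul_dvd_mul h1 h2

-- the special k = 2 term for p = 2
lemma aux_termB (t : ℤ) (ℓ : ℕ) (hℓ : 2 ≤ ℓ) (h1 : (2 : ℤ) ^ ℓ ∣ t)
    (h2 : ¬ (2 : ℤ) ^ (ℓ + 1) ∣ t) (x u : ℕ) (hx : 0 < x) (hu : 0 < u)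
    (hux : 2 ^ u ∣ x) :
    (2 : ℤ) ^ (2 * ℓ + u) ∣ t ^ 2 * (x.choose 2 : ℤ) - 2 ^ (2 * ℓ - 1) * (x : ℤ) := by
  obtain ⟨w, hw⟩ := h1
  have hwodd : ¬ (2 : ℤ) ∣ w := by
    rintro ⟨c, hc⟩
    apply h2
    refine ⟨c, ?_⟩
    rw [hw, hc, pow_succ]
    ring
  have hx2 : (2 : ℕ) ≤ x := by
    have h2u : 2 ≤ 2 ^ u := Nat.one_lt_two_pow_iff.mpr hu.ne'
    exact le_trans h2u (Nat.le_of_dvd hx hux)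
  have hxe : (2 : ℤ) ∣ (x : ℤ) := by
    have : (2 : ℕ) ∣ x := dvd_trans (dvd_pow_self 2 hu.ne') hux
    exact_mod_cast Int.natCast_dvd_natCast.mpr this
  have hchoose : (x.choose 2 : ℤ) * 2 = (x : ℤ) * ((x : ℤ) - 1) := by
    have h := Nat.add_one_mul_choose_eq (x - 1) 1
    have e1 : x - 1 + 1 = x := by omega
    rw [e1, Nat.choose_one_right] at h
    -- h : x * (x - 1) = x.choose 2 * 2
    have := congrArg (fun n : ℕ => (n : ℤ)) h
    push_cast [Nat.cast_sub (by omega : 1 ≤ x)] at this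
    linarith [this]
  have hwoddO : Odd w := by
    rcases Int.even_or_odd w with he | ho
    · exact absurd he.two_dvd hwodd
    · exact ho
  obtain ⟨a, ha⟩ := hwoddO
  obtain ⟨b, hb⟩ := hxe
  have hparity : (2 : ℤ) ∣ (w ^ 2 * ((x : ℤ) - 1) - 1) := by
    refine ⟨(2*a^2 + 2*a) * (2*b - 1) + b - 1, ?_⟩
    rw [ha, hb]; ring
  obtain ⟨c, hc⟩ := hparity
  have h2l : (2 : ℤ) ^ (2 * ℓ) = 2 ^ (2 * ℓ - 1) * 2 := by
    rw [← pow_succ]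
    congr 1
    omega
  have key : (2 : ℤ) * (t ^ 2 * (x.choose 2 : ℤ) - 2 ^ (2 * ℓ - 1) * (x : ℤ))
      = 2 ^ (2 * ℓ) * (x : ℤ) * (w ^ 2 * ((x : ℤ) - 1) - 1) := by
    have hsq : ((2 : ℤ) ^ ℓ) ^ 2 = 2 ^ (2 * ℓ) := by
      rw [← pow_mul, mul_comm]
    rw [hw]
    calc 2 * ((2 ^ ℓ * w) ^ 2 * (x.choose 2 : ℤ) - 2 ^ (2 * ℓ - 1) * (x : ℤ))
        = ((2:ℤ) ^ ℓ) ^ 2 * w ^ 2 * ((x.choose 2 : ℤ) * 2) - (2 ^ (2 * ℓ - 1) * 2) * (x : ℤ) := by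
          ring
      _ = 2 ^ (2 * ℓ) * w ^ 2 * ((x : ℤ) * ((x : ℤ) - 1)) - 2 ^ (2 * ℓ) * (x : ℤ) := by
          rw [hsq, hchoose, ← h2l]
      _ = 2 ^ (2 * ℓ) * (x : ℤ) * (w ^ 2 * ((x : ℤ) - 1) - 1) := by ring
  obtain ⟨m, hm⟩ := hux
  have hm' : (x : ℤ) = 2 ^ u * (m : ℤ) := by exact_mod_cast hm
  have hdvd : (2 : ℤ) * 2 ^ (2 * ℓ + u) ∣
      2 * (t ^ 2 * (x.choose 2 : ℤ) - 2 ^ (2 * ℓ - 1) * (x : ℤ)) := by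
    rw [key, hc, hm']
    refine ⟨(m : ℤ) * c, ?_⟩
    rw [pow_add]
    ring
  exact (mul_dvd_mul_iff_left (by norm_num : (2:ℤ) ≠ 0)).mp hdvd

theorem stmt_1 (p : ℕ) (hp : p.Prime) (s : ℤ) (hs : 1 < s)
    (ℓ : ℕ) (hℓ : 1 < ℓ)
    (hℓ1 : (p : ℤ) ^ ℓ ∣ s - 1) (hℓ2 : ¬ (p : ℤ) ^ (ℓ + 1) ∣ s - 1)
    (x : ℕ) (hx : 0 < x) (u : ℕ) (hu : 0 < u)
    (hu1 : p ^ u ∣ x) (hu2 : ¬ p ^ (u + 1) ∣ x) :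
    (p ≠ 2 → s ^ x - 1 ≡ (s - 1) * (x : ℤ) [ZMOD (p : ℤ) ^ (2 * ℓ + u)]) ∧
    (p = 2 → s ^ x - 1 ≡ (s - 1 + 2 ^ (2 * ℓ - 1)) * (x : ℤ) [ZMOD (2 : ℤ) ^ (2 * ℓ + u)]) := by
  set t : ℤ := s - 1 with ht
  have hx2 : 2 ≤ x := by
    have h2u : 2 ≤ p ^ u := by
      calc 2 ≤ p := hp.two_le
        _ = p ^ 1 := (pow_one p).symm
        _ ≤ p ^ u := Nat.pow_le_pow_right hp.pos hu
    exact le_trans h2u (Nat.le_of_dvd hx hu1)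
  have hst : s = t + 1 := by rw [ht]; ring
  have hbin : s ^ x = ∑ k ∈ Finset.range (x + 1), t ^ k * (x.choose k : ℤ) := by
    rw [hst, add_pow]
    apply Finset.sum_congr rfl
    intro k _
    rw [one_pow, mul_one]
  have hsplit : ∑ k ∈ Finset.range (x + 1), t ^ k * (x.choose k : ℤ)
      = 1 + t * (x : ℤ) + ∑ k ∈ Finset.Ico 2 (x + 1), t ^ k * (x.choose k : ℤ) := by
    rw [Finset.range_eq_Ico,
      Finset.sum_eq_sum_Ico_succ_bot (by omega : 0 < x + 1),
      Finset.sum_eq_sum_Ico_succ_bot (by omega : 1 < x + 1)]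
    simp [Nat.choose_one_right]
    ring
  have hkey : s ^ x - 1 - t * (x : ℤ) = ∑ k ∈ Finset.Ico 2 (x + 1), t ^ k * (x.choose k : ℤ) := by
    rw [hbin, hsplit]; ring
  constructor
  · intro hp2
    rw [Int.ModEq]
    apply (Int.modEq_iff_dvd).mpr
    have hsum : (p : ℤ) ^ (2 * ℓ + u) ∣ ∑ k ∈ Finset.Ico 2 (x + 1), t ^ k * (x.choose k : ℤ) := by
      apply Finset.dvd_sum
      intro k hk
      obtain ⟨hk1, hk2⟩ := Finset.mem_Ico.mp hk
      exact aux_termA p hp t ℓ (by omega) hℓ1 x u k hx hu1 hk1 (by omega)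
        (fun h => absurd h hp2)
    have heq : t * (x : ℤ) - (s ^ x - 1)
        = -(∑ k ∈ Finset.Ico 2 (x + 1), t ^ k * (x.choose k : ℤ)) := by
      rw [← hkey]; ring
    rw [heq]
    exact dvd_neg.mpr hsum
  · intro hp2
    subst hp2
    have hℓ1' : (2 : ℤ) ^ ℓ ∣ t := by exact_mod_cast hℓ1
    have hℓ2' : ¬ (2 : ℤ) ^ (ℓ + 1) ∣ t := by
      intro h; apply hℓ2; exact_mod_cast h
    apply (Int.modEq_iff_dvd).mpr
    have hsplit2 : ∑ k ∈ Finset.Ico 2 (x + 1), t ^ k * (x.choose k : ℤ)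
        = t ^ 2 * (x.choose 2 : ℤ) + ∑ k ∈ Finset.Ico 3 (x + 1), t ^ k * (x.choose k : ℤ) := by
      rw [Finset.sum_eq_sum_Ico_succ_bot (by omega : 2 < x + 1)]
    have hsum : (2 : ℤ) ^ (2 * ℓ + u) ∣ ∑ k ∈ Finset.Ico 3 (x + 1), t ^ k * (x.choose k : ℤ) := by
      apply Finset.dvd_sum
      intro k hk
      obtain ⟨hk1, hk2⟩ := Finset.mem_Ico.mp hk
      have := aux_termA 2 hp t ℓ (by omega) (by exact_mod_cast hℓ1) x u k hx hu1
        (by omega) (by omega) (fun _ => hk1)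
      exact_mod_cast this
    have hB := aux_termB t ℓ (by omega) hℓ1' hℓ2' x u hx hu hu1
    have heq : (t + 2 ^ (2 * ℓ - 1)) * (x : ℤ) - (s ^ x - 1)
        = -((t ^ 2 * (x.choose 2 : ℤ) - 2 ^ (2 * ℓ - 1) * (x : ℤ))
            + ∑ k ∈ Finset.Ico 3 (x + 1), t ^ k * (x.choose k : ℤ)) := by
      have : s ^ x - 1 - t * (x : ℤ)
          = t ^ 2 * (x.choose 2 : ℤ) + ∑ k ∈ Finset.Ico 3 (x + 1), t ^ k * (x.choose k : ℤ) := by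
        rw [hkey, hsplit2]
      linarith [this]
    rw [heq]
    exact dvd_neg.mpr (dvd_add hB hsum)
end

section
/- The commutator subgroup [H,H] of H = H(n,m;t,r) is the cyclic subgroup generated by a^{r−1}. -/
/-- The relations of the metacyclic group
`H(n,m;t,r) = ⟨a, b ∣ aⁿ = e, bᵐ = aᵗ, b a b⁻¹ = aʳ⟩`,
where the generator `a` is indexed by `0 : Fin 2` and `b` by `1 : Fin 2`. -/
def metaRels (n m t r : ℕ) : Set (FreeGroup (Fin 2)) :=
  {FreeGroup.of 0 ^ n,
   FreeGroup.of 1 ^ m * (FreeGroup.of 0 ^ t)⁻¹,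
   FreeGroup.of 1 * FreeGroup.of 0 * (FreeGroup.of 1)⁻¹ * (FreeGroup.of 0 ^ r)⁻¹}

/-- The metacyclic group `H(n,m;t,r)`. -/
abbrev MetaGroup (n m t r : ℕ) : Type := PresentedGroup (metaRels n m t r)

/-- The generator `a` of `H(n,m;t,r)`. -/
def gena (n m t r : ℕ) : MetaGroup n m t r := PresentedGroup.of 0

/-- The generator `b` of `H(n,m;t,r)`. -/
def genb (n m t r : ℕ) : MetaGroup n m t r := PresentedGroup.of 1

lemma meta_rel_one {n m t r : ℕ} {x : FreeGroup (Fin 2)} (hx : x ∈ metaRels n m t r) :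
    PresentedGroup.mk (metaRels n m t r) x = 1 := by
  change (QuotientGroup.mk x : MetaGroup n m t r) = 1
  rw [QuotientGroup.eq_one_iff]
  exact Subgroup.subset_normalClosure hx

lemma meta_rel_b {n m t r : ℕ} : (genb n m t r) ^ m = (gena n m t r) ^ t := by
  have h := meta_rel_one (n := n) (m := m) (t := t) (r := r)
    (x := FreeGroup.of 1 ^ m * (FreeGroup.of 0 ^ t)⁻¹) (by right; left; rfl)
  rw [map_mul, map_inv, map_pow, map_pow, mul_inv_eq_one] at h
  exact h

lemma meta_rel_c {n m t r : ℕ} :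
    genb n m t r * gena n m t r * (genb n m t r)⁻¹ = (gena n m t r) ^ r := by
  have h := meta_rel_one (n := n) (m := m) (t := t) (r := r)
    (x := FreeGroup.of 1 * FreeGroup.of 0 * (FreeGroup.of 1)⁻¹ * (FreeGroup.of 0 ^ r)⁻¹)
    (by right; right; rfl)
  rw [map_mul, map_mul, map_mul, map_inv, map_inv, map_pow, mul_inv_eq_one] at h
  exact h

lemma meta_generated_by {n m t r : ℕ} (H : Subgroup (MetaGroup n m t r))
    (h0 : gena n m t r ∈ H) (h1 : genb n m t r ∈ H) (g : MetaGroup n m t r) : g ∈ H := by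
  refine PresentedGroup.generated_by _ _ ?_ g
  intro j
  fin_cases j
  · exact h0
  · exact h1

open scoped commutatorElement in
theorem stmt_5 (n m t r : ℕ) (hn : 0 < n) (hm : 0 < m) (ht : 0 < t) (hr : 0 < r)
    (hrm : n ∣ r ^ m - 1) (htr : n ∣ t * (r - 1)) :
    commutator (MetaGroup n m t r) = Subgroup.zpowers (gena n m t r ^ (r - 1)) := by
  set G := MetaGroup n m t r
  set a : G := gena n m t r with ha
  set b : G := genb n m t r with hb
  have h1 : b * a * b⁻¹ = a ^ r := meta_rel_c
  have h2 : b ^ m = a ^ t := meta_rel_b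
  obtain ⟨s, hs⟩ : ∃ s, r = s + 1 := ⟨r - 1, (Nat.succ_pred_eq_of_pos hr).symm⟩
  obtain ⟨k, hk⟩ : ∃ k, m = k + 1 := ⟨m - 1, (Nat.succ_pred_eq_of_pos hm).symm⟩
  have hrs : r - 1 = s := by omega
  -- conjugation of powers of a by powers of b
  have hj : ∀ j : ℕ, b ^ j * a * (b ^ j)⁻¹ = a ^ (r ^ j) := by
    intro j
    induction j with
    | zero => simp
    | succ j ih =>
        have hstep : b ^ (j + 1) * a * (b ^ (j + 1))⁻¹ = b * (b ^ j * a * (b ^ j)⁻¹) * b⁻¹ := by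
          group
        rw [hstep, ih, ← conj_pow, h1, ← pow_mul, ← pow_succ']
  have hmj : b ^ m * a * (b ^ m)⁻¹ = a := by
    rw [h2]
    group
  have hinv : b⁻¹ * a * b = a ^ (r ^ k) := by
    have hbm : b ^ m = b * b ^ k := (congrArg (b ^ ·) hk).trans (pow_succ' b k)
    have h3 : b⁻¹ * (b ^ m * a * (b ^ m)⁻¹) * b = b ^ k * a * (b ^ k)⁻¹ := by
      rw [hbm]; group
    rw [hmj, hj] at h3
    exact h3
  -- the generator of the claimed commutator subgroup
  set x : G := a ^ (r - 1) with hx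
  have hxs : x = a ^ s := by rw [hx, hrs]
  have hbx : b * x * b⁻¹ = x ^ r := by
    rw [hxs, ← conj_pow, h1, ← pow_mul, mul_comm r s, pow_mul]
  have hbx' : b⁻¹ * x * b = x ^ (r ^ k) := by
    have hc : b⁻¹ * a ^ s * b = (b⁻¹ * a * b) ^ s := by
      have h4 := conj_pow (i := s) (a := b⁻¹) (b := a)
      rw [inv_inv] at h4; exact h4.symm
    rw [hxs, hc, hinv, ← pow_mul, mul_comm, pow_mul]
  set K : Subgroup G := Subgroup.zpowers x with hK
  -- commutator of b and a
  have har : a ^ r = a ^ s * a := (congrArg (a ^ ·) hs).trans (pow_succ a s)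
  have hcomm : ⁅b, a⁆ = x := by
    rw [commutatorElement_def, h1, har, hxs, mul_inv_cancel_right]
  -- conjugation helpers with integer exponents
  have hcz : ∀ (g y : G) (z : ℤ), g * y ^ z * g⁻¹ = (g * y * g⁻¹) ^ z := fun g y z =>
    conj_zpow.symm
  -- K is normal
  have hnorm : K.Normal := by
    rw [← Subgroup.normalizer_eq_top_iff, eq_top_iff]
    intro g _
    refine meta_generated_by (Subgroup.normalizer (K : Set G)) ?_ ?_ g
    · rw [Subgroup.mem_normalizer_iff]
      intro h
      have hca : ∀ y ∈ K, a * y * a⁻¹ = y := by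
        intro y hy
        obtain ⟨z, hz⟩ := Subgroup.mem_zpowers_iff.mp hy
        have hcax : Commute a (x ^ z) := ((Commute.refl a).pow_right _).zpow_right z
        rw [← hz, hcax.eq, mul_inv_cancel_right]
      constructor
      · intro hy
        show a * h * a⁻¹ ∈ K
        rw [hca h hy]
        exact hy
      · intro hy
        have h5 : a * (a * h * a⁻¹) * a⁻¹ = a * h * a⁻¹ := hca _ hy
        have h6 := mul_left_cancel (mul_right_cancel h5)
        show h ∈ K
        rwa [h6] at hy
    · rw [Subgroup.mem_normalizer_iff]
      intro h
      constructor
      · intro hy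
        obtain ⟨z, hz⟩ := Subgroup.mem_zpowers_iff.mp hy
        show b * h * b⁻¹ ∈ K
        rw [← hz, hcz b x z, hbx]
        refine Subgroup.mem_zpowers_iff.mpr ⟨(r : ℤ) * z, ?_⟩
        rw [zpow_mul, zpow_natCast]
      · intro hy
        obtain ⟨z, hz⟩ := Subgroup.mem_zpowers_iff.mp hy
        have h7 : h = b⁻¹ * x ^ z * b := by
          rw [hz]; show h = b⁻¹ * (b * h * b⁻¹) * b; group
        have h8 : b⁻¹ * x ^ z * b = (b⁻¹ * x * b) ^ z := by
          have := hcz b⁻¹ x z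
          rw [inv_inv] at this; exact this
        show h ∈ K
        rw [h7, h8, hbx']
        refine Subgroup.mem_zpowers_iff.mpr ⟨(r ^ k : ℕ) * z, ?_⟩
        rw [zpow_mul, zpow_natCast]
  haveI := hnorm
  -- the quotient map
  set π : G →* G ⧸ K := QuotientGroup.mk' K with hπ
  have hab : Commute (π a) (π b) := by
    have hone : π ⁅b, a⁆ = 1 := by
      rw [hcomm, ← MonoidHom.mem_ker, QuotientGroup.ker_mk']
      exact Subgroup.mem_zpowers x
    rw [map_commutatorElement] at hone
    exact (commutatorElement_eq_one_iff_commute.mp hone).symm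
  have step1 : ∀ g : G, g ∈ (Subgroup.centralizer {π a, π b}).comap π := by
    intro g
    refine meta_generated_by _ ?_ ?_ g
    · rw [Subgroup.mem_comap, Subgroup.mem_centralizer_iff]
      rintro y (rfl | rfl)
      · rfl
      · exact hab.symm.eq
    · rw [Subgroup.mem_comap, Subgroup.mem_centralizer_iff]
      rintro y (rfl | rfl)
      · exact hab.eq
      · rfl
  have key : ∀ g h : G, Commute (π g) (π h) := by
    intro g h
    have hh := step1 h
    rw [Subgroup.mem_comap, Subgroup.mem_centralizer_iff] at hh
    have hg : g ∈ (Subgroup.centralizer {π h}).comap π := by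
      refine meta_generated_by _ ?_ ?_ g
      · rw [Subgroup.mem_comap, Subgroup.mem_centralizer_iff]
        rintro y rfl
        exact (hh _ (by left; rfl)).symm
      · rw [Subgroup.mem_comap, Subgroup.mem_centralizer_iff]
        rintro y rfl
        exact (hh _ (by right; rfl)).symm
    rw [Subgroup.mem_comap, Subgroup.mem_centralizer_iff] at hg
    exact (hg _ rfl).symm
  apply le_antisymm
  · rw [commutator_def, Subgroup.commutator_le]
    intro g _ h _
    have hone : π ⁅g, h⁆ = 1 := by
      rw [map_commutatorElement]
      exact commutatorElement_eq_one_iff_commute.mpr (key g h)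
    rwa [← MonoidHom.mem_ker, QuotientGroup.ker_mk'] at hone
  · rw [Subgroup.zpowers_le, ← hcomm]
    exact Subgroup.commutator_mem_commutator (Subgroup.mem_top b) (Subgroup.mem_top a)
end

section
/- In H(n,m;t,r), for integers u, v ≥ 0 one has a^u b^v = e if and only if m divides v and n divides u + t·(v/m). -/
/- ### Auxiliary development: a concrete model of `H(n,m;t,r)` -/

lemma meta_add_div {m : ℕ} (hm : 0 < m) (x y : ℕ) :
    (x + y) / m = x / m + y / m + (x % m + y % m) / m := by
  conv_lhs => rw [← Nat.div_add_mod x m, ← Nat.div_add_mod y m]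
  rw [show m * (x / m) + x % m + (m * (y / m) + y % m)
        = x % m + y % m + (x / m + y / m) * m by ring,
      Nat.add_mul_div_right _ _ hm]
  ring

/-- Bundled hypotheses on `n m t r`. -/
class MetaHyp (n m t r : ℕ) : Prop where
  hm : 0 < m
  hr : 0 < r
  hrm : n ∣ r ^ m - 1
  htr : n ∣ t * (r - 1)

/-- The concrete model: pairs `(x, y) ∈ ZMod n × ZMod m`, representing `a^x b^y`. -/
structure Mdl (n m t r : ℕ) where
  x : ZMod n
  y : ZMod m

namespace Mdl

lemma neZero_m {n m t r : ℕ} [MetaHyp n m t r] : NeZero m := ⟨(MetaHyp.hm (n := n) (t := t) (r := r)).ne'⟩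

lemma r_pow_m {n m t r : ℕ} [MetaHyp n m t r] : (r : ZMod n) ^ m = 1 := by
  have h1 : 1 ≤ r ^ m := Nat.one_le_pow _ _ (MetaHyp.hr (n := n) (m := m) (t := t))
  have h0 : ((r ^ m - 1 : ℕ) : ZMod n) = 0 :=
    (ZMod.natCast_eq_zero_iff _ _).mpr (MetaHyp.hrm (t := t))
  have : ((r ^ m : ℕ) : ZMod n) = 1 := by
    rw [show r ^ m = (r ^ m - 1) + 1 by omega]
    push_cast [h0]; ring
  simpa using this

lemma r_pow_mod {n m t r : ℕ} [MetaHyp n m t r] (k : ℕ) : (r : ZMod n) ^ (k % m) = (r : ZMod n) ^ k :=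
  (pow_eq_pow_mod k (r_pow_m (m := m) (t := t))).symm

lemma t_mul_r {n m t r : ℕ} [MetaHyp n m t r] : (t : ZMod n) * r = t := by
  have h1 : 1 ≤ r := MetaHyp.hr (n := n) (m := m) (t := t)
  have h0 : ((t * (r - 1) : ℕ) : ZMod n) = 0 :=
    (ZMod.natCast_eq_zero_iff _ _).mpr (MetaHyp.htr (m := m))
  have : ((t * r - t : ℕ) : ZMod n) = 0 := by
    rw [show t * r - t = t * (r - 1) by cases r with
      | zero => omega
      | succ r' => simp [Nat.mul_sub, Nat.mul_succ]]
    exact h0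
  have hle : t ≤ t * r := Nat.le_mul_of_pos_right _ h1
  rw [Nat.cast_sub hle] at this
  push_cast at this ⊢
  linear_combination this

lemma t_mul_r_pow {n m t r : ℕ} [MetaHyp n m t r] (k : ℕ) : (t : ZMod n) * (r : ZMod n) ^ k = t := by
  induction k with
  | zero => simp
  | succ k ih =>
      rw [pow_succ, ← mul_assoc]
      calc (t : ZMod n) * (r : ZMod n) ^ k * r = (t : ZMod n) * r := by rw [ih]
        _ = t := t_mul_r (m := m)

/-- Multiplication on the model. -/
def mmul {n m t r : ℕ} (p q : Mdl n m t r) : Mdl n m t r :=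
  ⟨p.x + (r : ZMod n) ^ p.y.val * q.x
      + (t : ZMod n) * (((p.y.val + q.y.val) / m : ℕ) : ZMod n), p.y + q.y⟩

/-- Inversion on the model. -/
def minv {n m t r : ℕ} (p : Mdl n m t r) : Mdl n m t r :=
  ⟨-((r : ZMod n) ^ (-p.y).val * p.x)
      - (t : ZMod n) * ((((-p.y).val + p.y.val) / m : ℕ) : ZMod n), -p.y⟩

lemma mmul_assoc {n m t r : ℕ} [MetaHyp n m t r] (p q s : Mdl n m t r) :
    mmul (mmul p q) s = mmul p (mmul q s) := by
  haveI : NeZero m := neZero_m (n := n) (t := t) (r := r)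
  have hm : 0 < m := MetaHyp.hm (n := n) (t := t) (r := r)
  obtain ⟨i, j⟩ := p; obtain ⟨i', j'⟩ := q; obtain ⟨i'', j''⟩ := s
  simp only [mmul]
  set x := j.val with hxdef
  set y := j'.val with hydef
  set z := j''.val with hzdef
  have hx : x < m := ZMod.val_lt j
  have hz : z < m := ZMod.val_lt j''
  have hval1 : (j + j').val = (x + y) % m := ZMod.val_add j j'
  have hval2 : (j' + j'').val = (y + z) % m := ZMod.val_add j' j''
  have e1 : (r : ZMod n) ^ ((x + y) % m) = (r : ZMod n) ^ x * (r : ZMod n) ^ y := by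
    rw [r_pow_mod (t := t), pow_add]
  have c1 : (x + y + z) / m = (x + y) / m + ((x + y) % m + z) / m := by
    have := meta_add_div hm (x + y) z
    rw [Nat.div_eq_of_lt hz, Nat.mod_eq_of_lt hz] at this
    omega
  have c2 : (x + y + z) / m = (y + z) / m + (x + (y + z) % m) / m := by
    have := meta_add_div hm x (y + z)
    rw [Nat.div_eq_of_lt hx, Nat.mod_eq_of_lt hx, ← Nat.add_assoc] at this
    omega
  have hc : (x + y) / m + ((x + y) % m + z) / m
      = (y + z) / m + (x + (y + z) % m) / m := by omega
  have hcz : ((((x + y) / m : ℕ) : ZMod n)) + ((((x + y) % m + z) / m : ℕ) : ZMod n)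
      = (((y + z) / m : ℕ) : ZMod n) + (((x + (y + z) % m) / m : ℕ) : ZMod n) := by
    rw [← Nat.cast_add, ← Nat.cast_add, hc]
  have habs : (r : ZMod n) ^ x * ((t : ZMod n) * (((y + z) / m : ℕ) : ZMod n))
      = (t : ZMod n) * (((y + z) / m : ℕ) : ZMod n) := by
    rw [show (r : ZMod n) ^ x * ((t : ZMod n) * (((y + z) / m : ℕ) : ZMod n))
        = ((t : ZMod n) * (r : ZMod n) ^ x) * (((y + z) / m : ℕ) : ZMod n) by ring,
      t_mul_r_pow (m := m)]
  rw [Mdl.mk.injEq]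
  refine ⟨?_, add_assoc j j' j''⟩
  rw [hval1, hval2, e1]
  linear_combination (t : ZMod n) * hcz - habs

lemma one_mmul {n m t r : ℕ} [MetaHyp n m t r] (p : Mdl n m t r) :
    mmul (⟨0, 0⟩ : Mdl n m t r) p = p := by
  haveI : NeZero m := neZero_m (n := n) (t := t) (r := r)
  obtain ⟨i, j⟩ := p
  simp only [mmul, ZMod.val_zero, Mdl.mk.injEq]
  exact ⟨by simp [Nat.div_eq_of_lt (ZMod.val_lt j)], zero_add j⟩

lemma mmul_one {n m t r : ℕ} [MetaHyp n m t r] (p : Mdl n m t r) :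
    mmul p (⟨0, 0⟩ : Mdl n m t r) = p := by
  haveI : NeZero m := neZero_m (n := n) (t := t) (r := r)
  obtain ⟨i, j⟩ := p
  simp only [mmul, ZMod.val_zero, Mdl.mk.injEq]
  exact ⟨by simp [Nat.div_eq_of_lt (ZMod.val_lt j)], add_zero j⟩

lemma minv_mmul {n m t r : ℕ} [MetaHyp n m t r] (p : Mdl n m t r) :
    mmul (minv p) p = (⟨0, 0⟩ : Mdl n m t r) := by
  obtain ⟨i, j⟩ := p
  simp only [mmul, minv, Mdl.mk.injEq]
  exact ⟨by ring, neg_add_cancel j⟩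

instance instGroup {n m t r : ℕ} [MetaHyp n m t r] : Group (Mdl n m t r) where
  mul := mmul
  one := ⟨0, 0⟩
  inv := minv
  mul_assoc := mmul_assoc
  one_mul := one_mmul
  mul_one := mmul_one
  inv_mul_cancel := minv_mmul

lemma mul_def {n m t r : ℕ} [MetaHyp n m t r] (p q : Mdl n m t r) :
    p * q = mmul p q := rfl

lemma one_def {n m t r : ℕ} [MetaHyp n m t r] : (1 : Mdl n m t r) = ⟨0, 0⟩ := rfl

/-- The image of the generator `a`. -/
def A {n m t r : ℕ} : Mdl n m t r := ⟨1, 0⟩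

/-- The image of the generator `b`. -/
def B {n m t r : ℕ} : Mdl n m t r := ⟨(t : ZMod n) * (((1 / m : ℕ)) : ZMod n), 1⟩

lemma A_pow {n m t r : ℕ} [MetaHyp n m t r] (u : ℕ) :
    (A : Mdl n m t r) ^ u = ⟨(u : ZMod n), 0⟩ := by
  haveI : NeZero m := neZero_m (n := n) (t := t) (r := r)
  induction u with
  | zero => simp [one_def]
  | succ u ih =>
      rw [pow_succ, ih, mul_def]
      simp only [mmul, A, ZMod.val_zero, Mdl.mk.injEq]
      constructor
      · push_cast
        simp
      · simp

lemma B_pow {n m t r : ℕ} [MetaHyp n m t r] (v : ℕ) :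
    (B : Mdl n m t r) ^ v = ⟨(t : ZMod n) * (((v / m : ℕ)) : ZMod n), (v : ZMod m)⟩ := by
  haveI : NeZero m := neZero_m (n := n) (t := t) (r := r)
  have hm : 0 < m := MetaHyp.hm (n := n) (t := t) (r := r)
  induction v with
  | zero => simp [one_def, Nat.zero_div]
  | succ v ih =>
      rw [pow_succ, ih, mul_def]
      simp only [mmul, B, ZMod.val_natCast, ZMod.val_one_eq_one_mod, Mdl.mk.injEq]
      constructor
      · have habs : (r : ZMod n) ^ (v % m) * ((t : ZMod n) * (((1 / m : ℕ)) : ZMod n))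
            = (t : ZMod n) * (((1 / m : ℕ)) : ZMod n) := by
          rw [show (r : ZMod n) ^ (v % m) * ((t : ZMod n) * (((1 / m : ℕ)) : ZMod n))
              = ((t : ZMod n) * (r : ZMod n) ^ (v % m)) * (((1 / m : ℕ)) : ZMod n) by ring,
            t_mul_r_pow (m := m)]
        rw [habs]
        have hdiv : (v + 1) / m = v / m + 1 / m + (v % m + 1 % m) / m := meta_add_div hm v 1
        rw [hdiv]
        push_cast
        ring
      · push_cast
        ring

end Mdl

theorem stmt_6 (n m t r : ℕ) (hn : 0 < n) (hm : 0 < m) (ht : 0 < t) (hr : 0 < r)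
    (hrm : n ∣ r ^ m - 1) (htr : n ∣ t * (r - 1)) (u v : ℕ) :
    gena n m t r ^ u * genb n m t r ^ v = 1 ↔ m ∣ v ∧ n ∣ u + t * (v / m) := by
  haveI hyp : MetaHyp n m t r := ⟨hm, hr, hrm, htr⟩
  haveI : NeZero m := ⟨hm.ne'⟩
  haveI : NeZero n := ⟨hn.ne'⟩
  constructor
  · -- forward: use the homomorphism to the concrete model
    intro h
    set f : Fin 2 → Mdl n m t r := ![Mdl.A, Mdl.B] with hf
    have hrels : ∀ w ∈ metaRels n m t r, FreeGroup.lift f w = 1 := by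
      intro w hw
      have hA : f 0 = Mdl.A := rfl
      have hB : f 1 = Mdl.B := rfl
      rcases hw with hw | hw | hw
      · subst hw
        rw [map_pow, FreeGroup.lift_apply_of, hA, Mdl.A_pow]
        rw [Mdl.one_def]
        congr 1
        exact ZMod.natCast_self n
      · subst hw
        rw [map_mul, map_inv, map_pow, map_pow, FreeGroup.lift_apply_of, FreeGroup.lift_apply_of, hA, hB]
        rw [mul_inv_eq_one, Mdl.B_pow, Mdl.A_pow]
        congr 1
        · rw [Nat.div_self hm]; simp
        · simp [ZMod.natCast_self]
      · rw [Set.mem_singleton_iff] at hw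
        subst hw
        rw [map_mul, map_mul, map_mul, map_inv, map_inv, map_pow, FreeGroup.lift_apply_of,
          FreeGroup.lift_apply_of, hA, hB]
        rw [mul_inv_eq_one, mul_inv_eq_iff_eq_mul]
        -- B * A = A^r * B
        rw [Mdl.A_pow, Mdl.mul_def, Mdl.mul_def]
        have hrr : (r : ZMod n) ^ (1 % m) = (r : ZMod n) := by
          rw [Mdl.r_pow_mod (t := t) 1, pow_one]
        simp only [Mdl.mmul, Mdl.A, Mdl.B, ZMod.val_zero, ZMod.val_one_eq_one_mod,
          Mdl.mk.injEq]
        constructor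
        · rw [hrr]
          have : (1 % m) / m = 0 := Nat.div_eq_of_lt (Nat.mod_lt 1 hm)
          rw [Nat.add_zero, Nat.zero_add, this]
          simp
          ring
        · ring
    set φ : MetaGroup n m t r →* Mdl n m t r := PresentedGroup.toGroup hrels with hφ
    have hφa : φ (gena n m t r) = Mdl.A := PresentedGroup.toGroup.of hrels
    have hφb : φ (genb n m t r) = Mdl.B := PresentedGroup.toGroup.of hrels
    have himg : φ (gena n m t r ^ u * genb n m t r ^ v) = 1 := by rw [h, map_one]
    rw [map_mul, map_pow, map_pow, hφa, hφb, Mdl.A_pow, Mdl.B_pow, Mdl.mul_def,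
      Mdl.one_def] at himg
    simp only [Mdl.mmul, ZMod.val_zero, ZMod.val_natCast, Mdl.mk.injEq, pow_zero, one_mul,
      Nat.zero_add, zero_add] at himg
    obtain ⟨hx, hy⟩ := himg
    have hmv : m ∣ v := (ZMod.natCast_eq_zero_iff v m).mp hy
    refine ⟨hmv, ?_⟩
    rw [Nat.div_eq_of_lt (Nat.mod_lt v hm), Nat.cast_zero, mul_zero, add_zero] at hx
    have : ((u + t * (v / m) : ℕ) : ZMod n) = 0 := by push_cast; linear_combination hx
    exact (ZMod.natCast_eq_zero_iff _ n).mp this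
  · -- reverse: from the relations
    rintro ⟨⟨k, hk⟩, hdvd⟩
    have rel1 : gena n m t r ^ n = 1 := by
      have h1 : PresentedGroup.mk (metaRels n m t r) (FreeGroup.of 0 ^ n) = 1 :=
        (QuotientGroup.eq_one_iff _).mpr
          (Subgroup.subset_normalClosure (Set.mem_insert _ _))
      rw [map_pow] at h1
      exact h1
    have rel2 : genb n m t r ^ m = gena n m t r ^ t := by
      have h2 : PresentedGroup.mk (metaRels n m t r)
          (FreeGroup.of 1 ^ m * (FreeGroup.of 0 ^ t)⁻¹) = 1 :=
        (QuotientGroup.eq_one_iff _).mpr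
          (Subgroup.subset_normalClosure (Set.mem_insert_of_mem _ (Set.mem_insert _ _)))
      rw [map_mul, map_inv, map_pow, map_pow, mul_inv_eq_one] at h2
      exact h2
    have hbv : genb n m t r ^ v = gena n m t r ^ (t * k) := by
      rw [hk, pow_mul, rel2, ← pow_mul]
    rw [hbv, ← pow_add]
    obtain ⟨j, hj⟩ := hdvd
    have hkdiv : v / m = k := by rw [hk, Nat.mul_div_cancel_left k hm]
    rw [hkdiv] at hj
    rw [hj, pow_mul, rel1, one_pow]
end

section
/- The group H(n,m;t,r) has order n·m; moreover the cyclic subgroup generated by a has order n and is normal in H, with quotient H/⟨a⟩ cyclic of order m. -/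
namespace MetaProof

variable {n m t r : ℕ}

lemma rel_eq_one {w : FreeGroup (Fin 2)} (hw : w ∈ metaRels n m t r) :
    PresentedGroup.mk (metaRels n m t r) w = 1 :=
  (QuotientGroup.eq_one_iff w).mpr (Subgroup.subset_normalClosure hw)

lemma rel1 : (gena n m t r) ^ n = 1 := by
  have h := rel_eq_one (n := n) (m := m) (t := t) (r := r) (Or.inl rfl)
  simpa [gena, PresentedGroup.of, map_pow] using h

lemma rel2 : (genb n m t r) ^ m = (gena n m t r) ^ t := by
  have h := rel_eq_one (n := n) (m := m) (t := t) (r := r)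
    (Or.inr (Or.inl rfl))
  rw [map_mul, map_inv, map_pow, map_pow] at h
  exact eq_of_mul_inv_eq_one h

lemma rel3 : genb n m t r * gena n m t r * (genb n m t r)⁻¹ = (gena n m t r) ^ r := by
  have h := rel_eq_one (n := n) (m := m) (t := t) (r := r)
    (Or.inr (Or.inr rfl))
  rw [map_mul, map_inv, map_mul, map_inv, map_pow] at h
  exact eq_of_mul_inv_eq_one h


lemma conj_pow' (y u : ℕ) :
    (genb n m t r) ^ y * (gena n m t r) ^ u = (gena n m t r) ^ (r ^ y * u) * (genb n m t r) ^ y := by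
  induction y generalizing u with
  | zero => simp
  | succ y ih =>
    have h1 : genb n m t r * (gena n m t r) ^ u * (genb n m t r)⁻¹ = (gena n m t r) ^ (r * u) := by
      rw [← conj_pow, rel3, ← pow_mul, mul_comm r u, pow_mul]
    have h2 : genb n m t r * (gena n m t r) ^ u = (gena n m t r) ^ (r * u) * genb n m t r := by
      rw [← h1]; group
    calc (genb n m t r) ^ (y + 1) * (gena n m t r) ^ u
        = (genb n m t r) ^ y * (genb n m t r * (gena n m t r) ^ u) := by rw [pow_succ]; group
      _ = (genb n m t r) ^ y * ((gena n m t r) ^ (r * u) * genb n m t r) := by rw [h2]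
      _ = ((genb n m t r) ^ y * (gena n m t r) ^ (r * u)) * genb n m t r := by group
      _ = (gena n m t r) ^ (r ^ y * (r * u)) * (genb n m t r) ^ y * genb n m t r := by rw [ih (r * u)]
      _ = (gena n m t r) ^ (r ^ (y + 1) * u) * (genb n m t r) ^ (y + 1) := by
          rw [pow_succ, pow_succ]; ring_nf; group

lemma pow_a_mod (x : ℕ) : (gena n m t r) ^ x = (gena n m t r) ^ (x % n) := by
  conv_lhs => rw [← Nat.div_add_mod x n]
  rw [pow_add, pow_mul, rel1, one_pow, one_mul]

lemma pow_a_congr {x y : ℕ} (h : x ≡ y [MOD n]) : (gena n m t r) ^ x = (gena n m t r) ^ y := by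
  rw [pow_a_mod x, pow_a_mod y, h]

lemma pow_b_split (y : ℕ) :
    (genb n m t r) ^ y = (gena n m t r) ^ (t * (y / m)) * (genb n m t r) ^ (y % m) := by
  conv_lhs => rw [← Nat.div_add_mod y m]
  rw [pow_add, pow_mul, rel2, ← pow_mul, mul_comm t (y / m), mul_comm (y/m) t]


lemma exists_rep (hn : 0 < n) (hm : 0 < m) (hr : 0 < r) (hrm : n ∣ r ^ m - 1) (h : MetaGroup n m t r) :
    ∃ x y : ℕ, h = (gena n m t r) ^ x * (genb n m t r) ^ y := by
  set a := gena n m t r with ha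
  set b := genb n m t r with hb
  have mul_form : ∀ x y u v : ℕ,
      (a ^ x * b ^ y) * (a ^ u * b ^ v) = a ^ (x + r ^ y * u) * b ^ (y + v) := by
    intro x y u v
    calc (a ^ x * b ^ y) * (a ^ u * b ^ v) = a ^ x * (b ^ y * a ^ u) * b ^ v := by group
      _ = a ^ x * (a ^ (r ^ y * u) * b ^ y) * b ^ v := by rw [conj_pow']
      _ = a ^ (x + r ^ y * u) * b ^ (y + v) := by rw [pow_add, pow_add]; group
  let S : Subgroup (MetaGroup n m t r) :=
  { carrier := {h | ∃ x y : ℕ, h = a ^ x * b ^ y}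
    one_mem' := ⟨0, 0, by simp⟩
    mul_mem' := by
      rintro _ _ ⟨x, y, rfl⟩ ⟨u, v, rfl⟩
      exact ⟨x + r ^ y * u, y + v, mul_form x y u v⟩
    inv_mem' := by
      rintro _ ⟨x, y, rfl⟩
      have hrmmod : r ^ (m * y) ≡ 1 [MOD n] := by
        have h1 : 1 ≤ r ^ m := Nat.one_le_pow _ _ hr
        have h2 : r ^ m ≡ 1 [MOD n] := ((Nat.modEq_iff_dvd' h1).mpr hrm).symm
        calc r ^ (m * y) = (r ^ m) ^ y := by rw [pow_mul]
          _ ≡ 1 ^ y [MOD n] := h2.pow y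
          _ = 1 := one_pow y
      set p := r ^ (m * y - y) * ((x + t * y) * (n - 1)) with hp
      set q := m * y - y with hq
      have hyq : y + q = m * y := by
        have : y ≤ m * y := Nat.le_mul_of_pos_left y hm
        omega
      have key : (a ^ x * b ^ y) * (a ^ p * b ^ q) = 1 := by
        rw [mul_form, hyq, pow_b_split (m * y), Nat.mul_div_cancel_left y hm,
          Nat.mul_mod_right, pow_zero, mul_one, ← ha, ← pow_add]
        have hexp : x + r ^ y * p + t * y ≡ 0 [MOD n] := by
          have h3 : r ^ y * p = r ^ (m * y) * ((x + t * y) * (n - 1)) := by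
            rw [hp, ← mul_assoc, ← pow_add, hyq]
          rw [h3]
          calc x + r ^ (m * y) * ((x + t * y) * (n - 1)) + t * y
              ≡ x + 1 * ((x + t * y) * (n - 1)) + t * y [MOD n] :=
                Nat.ModEq.add (Nat.ModEq.add_left x (Nat.ModEq.mul hrmmod Nat.ModEq.rfl))
                  Nat.ModEq.rfl
            _ = (x + t * y) * n := by
                obtain ⟨n', rfl⟩ : ∃ n', n = n' + 1 := ⟨n - 1, by omega⟩
                simp only [Nat.add_sub_cancel, one_mul]
                ring
            _ ≡ 0 [MOD n] := (Nat.modEq_zero_iff_dvd).mpr ⟨x + t * y, mul_comm _ _⟩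
        rw [pow_a_congr hexp, pow_zero]
      have : (a ^ x * b ^ y)⁻¹ = a ^ p * b ^ q := inv_eq_of_mul_eq_one_right key
      rw [this]
      exact ⟨p, q, rfl⟩ }
  have hmem : h ∈ S := by
    apply PresentedGroup.generated_by
    intro j
    fin_cases j
    · exact ⟨1, 0, by simp [ha, gena]⟩
    · exact ⟨0, 1, by simp [hb, genb]⟩
  exact hmem


/-- carry term -/
def eps (n t : ℕ) {m : ℕ} (k : ZMod m) : ZMod n := if k + 1 = 0 then (t : ZMod n) else 0

def permA (n m : ℕ) : Equiv.Perm (ZMod n × ZMod m) :=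
  (Equiv.addRight (1 : ZMod n)).prodCongr (Equiv.refl (ZMod m))

lemma permA_apply (p : ZMod n × ZMod m) : permA n m p = (p.1 + 1, p.2) := rfl

lemma permA_pow (k : ℕ) (p : ZMod n × ZMod m) :
    ((permA n m) ^ k) p = (p.1 + (k : ZMod n), p.2) := by
  induction k with
  | zero => simp
  | succ k ih =>
    rw [pow_succ', Equiv.Perm.mul_apply, permA_apply]
    rw [ih]
    push_cast
    simp [add_assoc, add_comm]

def permB (n m t r : ℕ) (hm : 0 < m) (hm1 : (r : ZMod n) ^ m = 1) :
    Equiv.Perm (ZMod n × ZMod m) where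
  toFun p := ((r : ZMod n) * p.1 + eps n t p.2, p.2 + 1)
  invFun p := ((r : ZMod n) ^ (m - 1) * (p.1 - eps n t (p.2 - 1)), p.2 - 1)
  left_inv p := by
    obtain ⟨x, k⟩ := p
    simp only [add_sub_cancel_right]
    rw [← mul_assoc, ← pow_succ, Nat.sub_add_cancel hm, hm1, one_mul]
  right_inv p := by
    obtain ⟨x, k⟩ := p
    simp only [sub_add_cancel]
    rw [← mul_assoc, ← pow_succ', Nat.sub_add_cancel hm, hm1, one_mul, sub_add_cancel]


lemma eps_eq [NeZero m] (k : ZMod m) (j : ℕ) :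
    eps n t (k + (j : ZMod m)) = if m ∣ k.val + j + 1 then (t : ZMod n) else 0 := by
  unfold eps
  congr 1
  rw [eq_iff_iff]
  have : k + (j : ZMod m) + 1 = ((k.val + j + 1 : ℕ) : ZMod m) := by
    push_cast
    rw [ZMod.natCast_rightInverse k]
  rw [this, ZMod.natCast_eq_zero_iff]

lemma permB_apply (hm : 0 < m) (hm1 : (r : ZMod n) ^ m = 1) (p : ZMod n × ZMod m) :
    permB n m t r hm hm1 p = ((r : ZMod n) * p.1 + eps n t p.2, p.2 + 1) := rfl

lemma permB_pow [NeZero m] (hm : 0 < m) (hm1 : (r : ZMod n) ^ m = 1)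
    (hrt : (r : ZMod n) * (t : ZMod n) = (t : ZMod n)) (j : ℕ) (x : ZMod n) (k : ZMod m) :
    ((permB n m t r hm hm1) ^ j) (x, k) =
      ((r : ZMod n) ^ j * x + (t : ZMod n) * (((k.val + j) / m : ℕ) : ZMod n),
        k + (j : ZMod m)) := by
  induction j with
  | zero => simp [Nat.div_eq_of_lt (ZMod.val_lt k)]
  | succ j ih =>
    rw [pow_succ', Equiv.Perm.mul_apply, ih, permB_apply]
    have hts : ∀ c : ℕ, (r : ZMod n) * ((t : ZMod n) * (c : ZMod n)) = (t : ZMod n) * c := by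
      intro c
      rw [← mul_assoc, hrt]
    rw [Prod.mk.injEq]
    constructor
    case _ =>
      rw [mul_add, hts, eps_eq]
      rw [← add_assoc (k.val) j 1, Nat.succ_div]
      push_cast
      split
      case isTrue h => ring
      case isFalse h => ring
    case _ =>
      push_cast
      ring

lemma permA_pow_n : (permA n m) ^ n = 1 := by
  ext p
  · rw [permA_pow]
    simp
  · rw [permA_pow]
    simp

lemma permB_pow_m [NeZero m] [NeZero n] (hm : 0 < m) (hm1 : (r : ZMod n) ^ m = 1)
    (hrt : (r : ZMod n) * (t : ZMod n) = (t : ZMod n)) :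
    (permB n m t r hm hm1) ^ m = (permA n m) ^ t := by
  ext p
  all_goals obtain ⟨x, k⟩ := p
  · rw [permB_pow hm hm1 hrt, permA_pow]
    have h1 : (k.val + m) / m = 1 := by
      rw [Nat.add_div_right _ hm, Nat.div_eq_of_lt (ZMod.val_lt k)]
    rw [h1, hm1]
    simp
  · rw [permB_pow hm hm1 hrt, permA_pow]
    simp

lemma permB_conj [NeZero m] (hm : 0 < m) (hm1 : (r : ZMod n) ^ m = 1) :
    permB n m t r hm hm1 * permA n m * (permB n m t r hm hm1)⁻¹ = (permA n m) ^ r := by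
  rw [mul_inv_eq_iff_eq_mul]
  ext p
  all_goals obtain ⟨x, k⟩ := p
  · rw [Equiv.Perm.mul_apply, Equiv.Perm.mul_apply, permB_apply, permA_apply, permA_pow,
      permB_apply]
    ring
  · simp [Equiv.Perm.mul_apply, permB_apply, permA_apply, permA_pow]


lemma zmod_rm (hn : 0 < n) (hr : 0 < r) (hrm : n ∣ r ^ m - 1) : (r : ZMod n) ^ m = 1 := by
  obtain ⟨c, hc⟩ := hrm
  have h1 : 1 ≤ r ^ m := Nat.one_le_pow _ _ hr
  have h2 : r ^ m = n * c + 1 := by omega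
  have : ((r ^ m : ℕ) : ZMod n) = ((n * c + 1 : ℕ) : ZMod n) := by rw [h2]
  push_cast at this
  simpa using this

lemma zmod_rt (hr : 0 < r) (htr : n ∣ t * (r - 1)) :
    (r : ZMod n) * (t : ZMod n) = (t : ZMod n) := by
  obtain ⟨c, hc⟩ := htr
  have h2 : t * r = n * c + t := by
    have h3 : t * (r - 1) + t = t * r := by
      obtain ⟨r', rfl⟩ : ∃ r', r = r' + 1 := ⟨r - 1, by omega⟩
      simp [Nat.mul_add, Nat.add_sub_cancel]
    omega
  have : ((t * r : ℕ) : ZMod n) = ((n * c + t : ℕ) : ZMod n) := by rw [h2]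
  push_cast at this
  simpa [mul_comm] using this

lemma exists_psi (hn : 0 < n) (hm : 0 < m) (hr : 0 < r) (hrm : n ∣ r ^ m - 1)
    (htr : n ∣ t * (r - 1)) :
    ∃ ψ : MetaGroup n m t r →* Equiv.Perm (ZMod n × ZMod m),
      ψ (gena n m t r) = permA n m ∧
      ψ (genb n m t r) = permB n m t r hm (zmod_rm hn hr hrm) := by
  haveI : NeZero n := ⟨hn.ne'⟩
  haveI : NeZero m := ⟨hm.ne'⟩
  set hm1 := zmod_rm hn hr hrm
  set f : Fin 2 → Equiv.Perm (ZMod n × ZMod m) := ![permA n m, permB n m t r hm hm1] with hf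
  have hrels : ∀ w ∈ metaRels n m t r, FreeGroup.lift f w = 1 := by
    intro w hw
    rcases hw with rfl | rfl | rfl
    · rw [map_pow, FreeGroup.lift_apply_of]
      show (permA n m) ^ n = 1
      exact permA_pow_n
    · rw [map_mul, map_inv, map_pow, map_pow, FreeGroup.lift_apply_of, FreeGroup.lift_apply_of]
      show permB n m t r hm hm1 ^ m * ((permA n m) ^ t)⁻¹ = 1
      rw [permB_pow_m hm hm1 (zmod_rt hr htr)]
      group
    · rw [map_mul, map_inv, map_mul, map_mul, map_inv, map_pow, FreeGroup.lift_apply_of,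
        FreeGroup.lift_apply_of]
      show permB n m t r hm hm1 * permA n m * (permB n m t r hm hm1)⁻¹ *
        ((permA n m) ^ r)⁻¹ = 1
      rw [permB_conj hm hm1]
      group
  exact ⟨PresentedGroup.toGroup hrels, PresentedGroup.toGroup.of hrels,
    PresentedGroup.toGroup.of hrels⟩

lemma exists_pi :
    ∃ π : MetaGroup n m t r →* Multiplicative (ZMod m),
      π (gena n m t r) = 1 ∧ π (genb n m t r) = Multiplicative.ofAdd (1 : ZMod m) := by
  set f : Fin 2 → Multiplicative (ZMod m) := ![1, Multiplicative.ofAdd (1 : ZMod m)] with hf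
  have hrels : ∀ w ∈ metaRels n m t r, FreeGroup.lift f w = 1 := by
    intro w hw
    rcases hw with rfl | rfl | rfl
    · rw [map_pow, FreeGroup.lift_apply_of]
      show (1 : Multiplicative (ZMod m)) ^ n = 1
      simp
    · rw [map_mul, map_inv, map_pow, map_pow, FreeGroup.lift_apply_of, FreeGroup.lift_apply_of]
      show (Multiplicative.ofAdd (1 : ZMod m)) ^ m * ((1 : Multiplicative (ZMod m)) ^ t)⁻¹ = 1
      rw [one_pow, inv_one, mul_one, ← ofAdd_nsmul]
      simp
    · rw [map_mul, map_inv, map_mul, map_mul, map_inv, map_pow, FreeGroup.lift_apply_of,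
        FreeGroup.lift_apply_of]
      show Multiplicative.ofAdd (1 : ZMod m) * 1 * (Multiplicative.ofAdd (1 : ZMod m))⁻¹ *
        ((1 : Multiplicative (ZMod m)) ^ r)⁻¹ = 1
      simp
  exact ⟨PresentedGroup.toGroup hrels, PresentedGroup.toGroup.of hrels,
    PresentedGroup.toGroup.of hrels⟩

end MetaProof


theorem stmt_7 (n m t r : ℕ) (hn : 0 < n) (hm : 0 < m) (ht : 0 < t) (hr : 0 < r)
    (hrm : n ∣ r ^ m - 1) (htr : n ∣ t * (r - 1)) :
    Nat.card (MetaGroup n m t r) = n * m ∧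
    Nat.card (Subgroup.zpowers (gena n m t r)) = n ∧
    ∃ hN : (Subgroup.zpowers (gena n m t r)).Normal,
      letI := hN
      IsCyclic (MetaGroup n m t r ⧸ Subgroup.zpowers (gena n m t r)) ∧
      Nat.card (MetaGroup n m t r ⧸ Subgroup.zpowers (gena n m t r)) = m := by
  classical
  haveI : NeZero n := ⟨hn.ne'⟩
  haveI : NeZero m := ⟨hm.ne'⟩
  obtain ⟨ψ, hψa, hψb⟩ := MetaProof.exists_psi hn hm hr hrm htr
  set a := gena n m t r with ha
  set b := genb n m t r with hb
  set g : ZMod n × ZMod m → MetaGroup n m t r := fun p => a ^ p.1.val * b ^ p.2.val with hg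
  have heval : ∀ p : ZMod n × ZMod m, (ψ (g p)) (0, 0) = p := by
    rintro ⟨i, j⟩
    show (ψ (a ^ i.val * b ^ j.val)) (0, 0) = (i, j)
    rw [map_mul, map_pow, map_pow, hψa, hψb, Equiv.Perm.mul_apply,
      MetaProof.permB_pow hm (MetaProof.zmod_rm hn hr hrm) (MetaProof.zmod_rt hr htr),
      MetaProof.permA_pow]
    rw [ZMod.val_zero, zero_add, Nat.div_eq_of_lt (ZMod.val_lt j)]
    simp
  have hinj : Function.Injective g := by
    intro p q hpq
    have h1 := heval p
    rw [hpq, heval q] at h1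
    exact h1.symm
  have hsurj : Function.Surjective g := by
    intro h
    obtain ⟨x, y, rfl⟩ := MetaProof.exists_rep hn hm hr hrm h
    refine ⟨(((x + t * (y / m) : ℕ) : ZMod n), ((y : ℕ) : ZMod m)), ?_⟩
    show a ^ (((x + t * (y / m) : ℕ) : ZMod n)).val * b ^ (((y : ℕ) : ZMod m)).val
      = a ^ x * b ^ y
    rw [ZMod.val_natCast, ZMod.val_natCast, ← MetaProof.pow_a_mod]
    conv_rhs => rw [MetaProof.pow_b_split y]
    rw [← mul_assoc, ← pow_add]
  have hbij : Function.Bijective g := ⟨hinj, hsurj⟩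
  have hcard : Nat.card (MetaGroup n m t r) = n * m := by
    rw [← Nat.card_eq_of_bijective g hbij, Nat.card_prod, Nat.card_zmod, Nat.card_zmod]
  haveI hfin : Finite (MetaGroup n m t r) := Nat.finite_of_card_ne_zero (by
    rw [hcard]; positivity)
  have hdvd : ∀ k : ℕ, a ^ k = 1 → n ∣ k := by
    intro k hk
    have h1 : (ψ (a ^ k)) (0, 0) = ((0 : ZMod n), (0 : ZMod m)) := by rw [hk]; simp
    rw [map_pow, hψa, MetaProof.permA_pow] at h1
    have h2 : ((k : ℕ) : ZMod n) = 0 := by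
      have := congrArg Prod.fst h1
      simpa using this
    exact (ZMod.natCast_eq_zero_iff k n).mp h2
  have horder : orderOf a = n :=
    Nat.dvd_antisymm (orderOf_dvd_of_pow_eq_one MetaProof.rel1)
      (hdvd _ (pow_orderOf_eq_one a))
  have hcard_zpow : Nat.card (Subgroup.zpowers a) = n := by
    rw [Nat.card_zpowers, horder]
  obtain ⟨π, hπa, hπb⟩ := MetaProof.exists_pi (n := n) (m := m) (t := t) (r := r)
  have hπsurj : Function.Surjective π := by
    intro z
    refine ⟨b ^ (Multiplicative.toAdd z).val, ?_⟩
    rw [map_pow, hπb, ← ofAdd_nsmul]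
    simp [nsmul_eq_mul]
  have hqcard : Nat.card (MetaGroup n m t r ⧸ π.ker) = m := by
    rw [Nat.card_congr (QuotientGroup.quotientKerEquivOfSurjective π hπsurj).toEquiv,
      Nat.card_congr (Multiplicative.toAdd (α := ZMod m)), Nat.card_zmod]
  have hkcard : Nat.card π.ker = n := by
    have h2 := Subgroup.card_eq_card_quotient_mul_card_subgroup π.ker
    rw [hcard, hqcard] at h2
    rw [Nat.mul_comm n m] at h2
    exact (Nat.eq_of_mul_eq_mul_left hm h2).symm
  have hker : Subgroup.zpowers a = π.ker := by
    apply Subgroup.eq_of_le_of_card_ge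
    · rw [Subgroup.zpowers_le]
      exact MonoidHom.mem_ker.mpr hπa
    · rw [hkcard, hcard_zpow]
  have hN : (Subgroup.zpowers a).Normal := hker ▸ π.normal_ker
  refine ⟨hcard, hcard_zpow, hN, ?_, ?_⟩
  · letI := hN
    refine ⟨⟨QuotientGroup.mk' (Subgroup.zpowers a) b, fun q => ?_⟩⟩
    obtain ⟨h, rfl⟩ := QuotientGroup.mk'_surjective (Subgroup.zpowers a) q
    obtain ⟨x, y, rfl⟩ := MetaProof.exists_rep hn hm hr hrm h
    refine ⟨(y : ℤ), ?_⟩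
    have hone : QuotientGroup.mk' (Subgroup.zpowers a) (a ^ x) = 1 := by
      rw [QuotientGroup.mk'_apply, QuotientGroup.eq_one_iff]
      exact Subgroup.npow_mem_zpowers a x
    show (QuotientGroup.mk' (Subgroup.zpowers a)) b ^ (y : ℤ)
      = (QuotientGroup.mk' (Subgroup.zpowers a)) (a ^ x * b ^ y)
    rw [zpow_natCast, ← map_pow, map_mul, hone, one_mul]
  · letI := hN
    have h2 := Subgroup.card_eq_card_quotient_mul_card_subgroup (Subgroup.zpowers a)
    rw [hcard, hcard_zpow, Nat.mul_comm n m] at h2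
    exact (Nat.eq_of_mul_eq_mul_right hn h2).symm
end

section
/- Let x₁, x₂, y₁, y₂ be nonnegative integers and set d = gcd(r−1, n). There exists a group homomorphism σ : H → H with σ(a) = a^{x₁} b^{y₁} and σ(b) = a^{x₂} b^{y₂} if and only if the following three conditions hold: (1) gcd(d,t)·y₁ ≡ 0 (mod m); (2) x₂·[m]_{r^{y₂}} + t·y₂ − x₁·[t]_{r^{y₁}} − (t·y₁/m)·t ≡ 0 (mod n); (3) (r^{y₁}−1)·x₂ + ([r]_{r^{y₁}} − r^{y₂})·x₁ + ((r−1)·y₁/m)·t ≡ 0 (mod n). (Condition (1) guarantees that m divides t·y₁ and m divides (r−1)·y₁, so the quotients in (2) and (3) are integers.) -/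
-- ## Auxiliary model group

/-- Model group: pairs (x, j) ∈ ZMod n × ℤ with twisted multiplication by unit u. -/
structure KE (n : ℕ) (u : (ZMod n)ˣ) where
  x : ZMod n
  j : ℤ

namespace KE

variable {n : ℕ} {u : (ZMod n)ˣ}

instance : Group (KE n u) where
  mul p q := ⟨p.x + (u ^ p.j : (ZMod n)ˣ) * q.x, p.j + q.j⟩
  one := ⟨0, 0⟩
  inv p := ⟨-((u ^ (-p.j) : (ZMod n)ˣ) * p.x), -p.j⟩
  mul_assoc p q s := by
    show (⟨_,_⟩ : KE n u) = ⟨_,_⟩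
    congr 1
    · show p.x + ↑(u ^ p.j) * q.x + ↑(u ^ (p.j + q.j)) * s.x
        = p.x + ↑(u ^ p.j) * (q.x + ↑(u ^ q.j) * s.x)
      rw [zpow_add]; push_cast; ring
    · exact add_assoc _ _ _
  one_mul p := by
    show (⟨0 + ↑(u ^ (0:ℤ)) * p.x, 0 + p.j⟩ : KE n u) = p
    simp
  mul_one p := by
    show (⟨p.x + ↑(u ^ p.j) * 0, p.j + 0⟩ : KE n u) = p
    simp
  inv_mul_cancel p := by
    show (⟨-(↑(u ^ (-p.j)) * p.x) + ↑(u ^ (-p.j)) * p.x, -p.j + p.j⟩ : KE n u) = ⟨0,0⟩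
    simp

@[simp] lemma mul_def (p q : KE n u) :
    p * q = ⟨p.x + (u ^ p.j : (ZMod n)ˣ) * q.x, p.j + q.j⟩ := rfl

@[simp] lemma one_def : (1 : KE n u) = ⟨0, 0⟩ := rfl

@[simp] lemma inv_def (p : KE n u) :
    p⁻¹ = ⟨-((u ^ (-p.j) : (ZMod n)ˣ) * p.x), -p.j⟩ := rfl

/-- power formula -/
lemma pow_formula (x : ZMod n) (y : ℤ) (k : ℕ) :
    (⟨x, y⟩ : KE n u) ^ k
      = ⟨x * ∑ i ∈ Finset.range k, ((u ^ y : (ZMod n)ˣ) : ZMod n) ^ i, (k : ℤ) * y⟩ := by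
  induction k with
  | zero => simp
  | succ k ih =>
      rw [pow_succ, ih, mul_def]
      congr 1
      · show x * _ + ↑(u ^ ((k:ℤ) * y)) * x = x * _
        rw [Finset.sum_range_succ]
        rw [show ((u ^ ((k:ℤ) * y) : (ZMod n)ˣ) : ZMod n) = ((u ^ y : (ZMod n)ˣ) : ZMod n) ^ k by
          rw [mul_comm (k:ℤ) y, zpow_mul, zpow_natCast]; push_cast; ring]
        ring
      · push_cast; ring

variable (u) in
/-- The central element `(-t, m)`. -/
def z0 (t m : ℕ) : KE n u := ⟨-(t : ZMod n), (m : ℤ)⟩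

section hyp
variable {t m : ℕ} (hum : u ^ m = 1) (hut : (t : ZMod n) * u = t)

include hut in
lemma tfix (j : ℤ) : (t : ZMod n) * ((u ^ j : (ZMod n)ˣ) : ZMod n) = t := by
  have hinv : (t : ZMod n) * ((u⁻¹ : (ZMod n)ˣ) : ZMod n) = t := by
    calc (t : ZMod n) * ((u⁻¹ : (ZMod n)ˣ) : ZMod n)
        = ((t : ZMod n) * u) * ((u⁻¹ : (ZMod n)ˣ) : ZMod n) := by rw [hut]
      _ = (t : ZMod n) * ((u * u⁻¹ : (ZMod n)ˣ) : ZMod n) := by push_cast; ring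
      _ = t := by simp
  induction j using Int.induction_on with
  | zero => simp
  | succ k ih => rw [zpow_add_one]; push_cast; rw [← mul_assoc, ih, hut]
  | pred k ih => rw [zpow_sub_one]; push_cast; rw [← mul_assoc, ih, hinv]

include hum in
lemma upow_mul_m (k : ℤ) : u ^ (k * (m:ℤ)) = 1 := by
  rw [mul_comm, zpow_mul, zpow_natCast, hum, one_zpow]

include hum hut in
lemma z0_zpow (k : ℤ) : (z0 u t m) ^ k = ⟨-(t:ZMod n) * k, k * m⟩ := by
  induction k using Int.induction_on with
  | zero => simp [z0]
  | succ k ih =>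
      rw [zpow_add_one, ih, mul_def]
      simp only [mk.injEq, z0]
      constructor
      · rw [upow_mul_m hum]; push_cast; ring
      · push_cast; ring
  | pred k ih =>
      have hz0inv : (z0 u t m)⁻¹ = (⟨(t : ZMod n), -(m:ℤ)⟩ : KE n u) := by
        rw [inv_def]
        simp only [mk.injEq, z0]
        constructor
        · rw [show (-(m:ℤ)) = (-1:ℤ) * m by ring, upow_mul_m hum]; simp
        · trivial
      rw [zpow_sub_one, ih, hz0inv, mul_def]
      simp only [mk.injEq]
      constructor
      · rw [upow_mul_m hum]; push_cast; ring
      · push_cast; ring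

include hum hut in
lemma z0_commute (g : KE n u) : Commute (z0 u t m) g := by
  show _ = _
  rw [mul_def, mul_def]
  simp only [mk.injEq, z0]
  constructor
  · rw [show ((m:ℤ)) = (1:ℤ) * m by ring, upow_mul_m hum, mul_neg, mul_comm _ (t:ZMod n),
      tfix hut]
    push_cast; ring
  · exact add_comm _ _

include hum hut in
lemma z0_normal : (Subgroup.zpowers (z0 u t m)).Normal := by
  constructor
  intro h hmem g
  obtain ⟨k, hk⟩ := Subgroup.mem_zpowers_iff.mp hmem
  have hc : Commute h g := hk ▸ (z0_commute hum hut g).zpow_left k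
  rw [show g * h * g⁻¹ = h from by rw [← hc.eq, mul_assoc, mul_inv_cancel, mul_one]]
  exact hmem

include hum hut in
lemma mul_z0_zpow (P : KE n u) (k : ℤ) :
    P * (z0 u t m) ^ k = ⟨P.x - (t:ZMod n) * k, P.j + k * m⟩ := by
  rw [z0_zpow hum hut, mul_def]
  simp only [mk.injEq, and_true]
  have h := tfix hut P.j
  calc P.x + ↑(u ^ P.j) * (-(t:ZMod n) * (k:ZMod n))
      = P.x - ((t:ZMod n) * ↑(u ^ P.j)) * (k:ZMod n) := by ring
    _ = P.x - (t:ZMod n) * (k:ZMod n) := by rw [h]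

lemma ext' {p q : KE n u} (hx : p.x = q.x) (hj : p.j = q.j) : p = q := by
  cases p; cases q; cases hx; cases hj; rfl

include hum hut in
lemma mk_iff (P P' : KE n u) :
    (QuotientGroup.mk P : KE n u ⧸ Subgroup.zpowers (z0 u t m)) = QuotientGroup.mk P' ↔
    ∃ k : ℤ, P'.x = P.x - (t : ZMod n) * k ∧ P'.j = P.j + k * m := by
  rw [QuotientGroup.eq]
  constructor
  · intro h
    obtain ⟨k, hk⟩ := Subgroup.mem_zpowers_iff.mp h
    have h2 : P * (z0 u t m) ^ k = P' := by rw [hk]; group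
    rw [mul_z0_zpow hum hut] at h2
    exact ⟨k, by rw [← h2], by rw [← h2]⟩
  · rintro ⟨k, h1, h2⟩
    have h3 : P * (z0 u t m) ^ k = P' := by
      rw [mul_z0_zpow hum hut]; exact ext' h1.symm h2.symm
    rw [← h3, show P⁻¹ * (P * (z0 u t m) ^ k) = (z0 u t m) ^ k by group]
    exact Subgroup.zpow_mem _ (Subgroup.mem_zpowers _) k

end hyp
end KE

-- ## Auxiliary lemmas
def natGeom (s k : ℕ) : ℕ := ∑ i ∈ Finset.range k, s ^ i

section arith

lemma natGeom_succ (s k : ℕ) : natGeom s (k+1) = natGeom s k + s ^ k := by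
  simp [natGeom, Finset.sum_range_succ]

lemma natGeom_mul (s a b : ℕ) : natGeom s (a*b) = natGeom (s^a) b * natGeom s a := by
  induction b with
  | zero => simp [natGeom]
  | succ b ih =>
      rw [Nat.mul_succ, natGeom_succ, add_mul, ← ih, natGeom]
      rw [Finset.sum_range_add]
      congr 1
      rw [natGeom, Finset.mul_sum]
      refine Finset.sum_congr rfl fun i _ => ?_
      rw [← pow_mul, ← pow_add]

lemma natGeom_modEq (s k M : ℕ) (h : s ≡ 1 [MOD M]) : natGeom s k ≡ k [MOD M] := by
  induction k with
  | zero => simp [natGeom]; rfl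
  | succ k ih => exact (natGeom_succ s k) ▸ (ih.add ((h.pow k).trans (by simp; rfl)))

/-- The key arithmetic fact: if `m ∣ gcd(gcd(r-1,n),t) * y`, then `t ∣ [t]_{r^y}`. -/
lemma crux_t (n m t r y : ℕ) (hm : 0 < m) (hr : 0 < r) (htn : t ∣ n) (ht : 0 < t)
    (hrm : n ∣ r ^ m - 1) (h1 : m ∣ Nat.gcd (Nat.gcd (r-1) n) t * y) :
    t ∣ natGeom (r ^ y) t := by
  set d := Nat.gcd (Nat.gcd (r-1) n) t with hd
  have hdt : d ∣ t := Nat.gcd_dvd_right _ _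
  have hdr : d ∣ r - 1 := (Nat.gcd_dvd_left _ _).trans (Nat.gcd_dvd_left _ _)
  have hrm' : r ^ m ≡ 1 [MOD n] :=
    ((Nat.modEq_iff_dvd' (Nat.one_le_pow _ _ hr)).mpr hrm).symm
  -- s ≡ 1 [MOD d]
  have hs1 : r ^ y ≡ 1 [MOD d] := by
    have : r ≡ 1 [MOD d] := ((Nat.modEq_iff_dvd' hr).mpr hdr).symm
    simpa using this.pow y
  -- (r^y)^d ≡ 1 [MOD n]
  have hsd : (r ^ y) ^ d ≡ 1 [MOD n] := by
    obtain ⟨c, hc⟩ := h1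
    calc (r ^ y) ^ d = (r ^ m) ^ c := by
          rw [← pow_mul, ← pow_mul, mul_comm y d, hc]
      _ ≡ 1 ^ c [MOD n] := hrm'.pow c
      _ = 1 := one_pow c
  obtain ⟨e, he⟩ := hdt
  have key : natGeom (r^y) t = natGeom ((r^y)^d) e * natGeom (r^y) d := by
    rw [← natGeom_mul, ← he]
  obtain ⟨c₁, hc₁⟩ : d ∣ natGeom (r^y) d := by
    have := natGeom_modEq (r^y) d d hs1
    simpa [Nat.modEq_zero_iff_dvd] using this.trans (Nat.modEq_zero_iff_dvd.mpr dvd_rfl)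
  have h2 : natGeom ((r^y)^d) e ≡ e [MOD t] :=
    natGeom_modEq _ e t ((Nat.ModEq.of_dvd htn) hsd)
  have : natGeom (r^y) t ≡ e * (d * c₁) [MOD t] := by
    rw [key, hc₁]; exact h2.mul_right _
  have h3 : e * (d * c₁) ≡ 0 [MOD t] := by
    have : t ∣ e * (d * c₁) := ⟨c₁, by rw [he]; ring⟩
    simpa [Nat.modEq_zero_iff_dvd] using this
  simpa [Nat.modEq_zero_iff_dvd] using this.trans h3

/-- if moreover `t ∣ n` and `m ∣ t * y` then `n ∣ [n]_{r^y}`. -/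
lemma crux_n (n m t r y : ℕ) (hm : 0 < m) (hr : 0 < r) (htn : t ∣ n) (ht : 0 < t)
    (hrm : n ∣ r ^ m - 1) (h1 : m ∣ Nat.gcd (Nat.gcd (r-1) n) t * y) (hty : m ∣ t * y) :
    n ∣ natGeom (r ^ y) n := by
  have hrm' : r ^ m ≡ 1 [MOD n] :=
    ((Nat.modEq_iff_dvd' (Nat.one_le_pow _ _ hr)).mpr hrm).symm
  have hst : (r ^ y) ^ t ≡ 1 [MOD n] := by
    obtain ⟨c, hc⟩ := hty
    calc (r ^ y) ^ t = (r ^ m) ^ c := by rw [← pow_mul, ← pow_mul, mul_comm y t, hc]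
      _ ≡ 1 ^ c [MOD n] := hrm'.pow c
      _ = 1 := one_pow c
  obtain ⟨c₁, hc₁⟩ := crux_t n m t r y hm hr htn ht hrm h1
  obtain ⟨q, hq⟩ := htn
  have key : natGeom (r^y) n = natGeom ((r^y)^t) q * natGeom (r^y) t := by
    rw [← natGeom_mul, ← hq]
  have h2 : natGeom ((r^y)^t) q ≡ q [MOD n] := natGeom_modEq _ q n hst
  have : natGeom (r^y) n ≡ q * (t * c₁) [MOD n] := by
    rw [key, hc₁]; exact h2.mul_right _
  have h3 : q * (t * c₁) ≡ 0 [MOD n] := by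
    have : n ∣ q * (t * c₁) := ⟨c₁, by rw [hq]; ring⟩
    simpa [Nat.modEq_zero_iff_dvd] using this
  simpa [Nat.modEq_zero_iff_dvd] using this.trans h3

end arith

section H
variable (n m t r : ℕ)

lemma mk_eq_one {ρ : FreeGroup (Fin 2)} (h : ρ ∈ metaRels n m t r) :
    (QuotientGroup.mk ρ : MetaGroup n m t r) = 1 :=
  (QuotientGroup.eq_one_iff ρ).mpr (Subgroup.subset_normalClosure h)

lemma gena_eq : gena n m t r = (QuotientGroup.mk' _) (FreeGroup.of 0) := rfl
lemma genb_eq : genb n m t r = (QuotientGroup.mk' _) (FreeGroup.of 1) := rfl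

lemma rela : gena n m t r ^ n = 1 := by
  have h := mk_eq_one n m t r (Set.mem_insert _ _)
  exact (map_pow _ _ _).symm.trans h

lemma relb : genb n m t r ^ m = gena n m t r ^ t := by
  have h := mk_eq_one n m t r (Set.mem_insert_of_mem _ (Set.mem_insert _ _))
  have : genb n m t r ^ m * (gena n m t r ^ t)⁻¹ = 1 := by
    refine (?_ : _ = (QuotientGroup.mk' (Subgroup.normalClosure (metaRels n m t r))) (FreeGroup.of 1 ^ m * (FreeGroup.of 0 ^ t)⁻¹)).trans h
    rw [map_mul, map_inv, map_pow, map_pow]; rfl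
  exact mul_inv_eq_one.mp this

lemma relc : genb n m t r * gena n m t r = gena n m t r ^ r * genb n m t r := by
  have h := mk_eq_one n m t r
    (Set.mem_insert_of_mem _ (Set.mem_insert_of_mem _ rfl))
  have : genb n m t r * gena n m t r * (genb n m t r)⁻¹ * (gena n m t r ^ r)⁻¹ = 1 := by
    refine (?_ : _ = (QuotientGroup.mk' (Subgroup.normalClosure (metaRels n m t r)))
        (FreeGroup.of 1 * FreeGroup.of 0 * (FreeGroup.of 1)⁻¹ * (FreeGroup.of 0 ^ r)⁻¹)).trans h
    rw [map_mul, map_mul, map_mul, map_inv, map_inv, map_pow]; rfl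
  have h2 : genb n m t r * gena n m t r * (genb n m t r)⁻¹ = gena n m t r ^ r := by
    have := mul_eq_one_iff_eq_inv.mp this
    rw [this]; group
  rw [← h2]; group

lemma comm_pow (s : ℕ) :
    genb n m t r * gena n m t r ^ s = gena n m t r ^ (s * r) * genb n m t r := by
  induction s with
  | zero => simp
  | succ s ih =>
      rw [pow_succ, ← mul_assoc, ih, mul_assoc, relc, ← mul_assoc, ← pow_add, Nat.succ_mul]

lemma comm_pow' (j s : ℕ) :
    genb n m t r ^ j * gena n m t r ^ s = gena n m t r ^ (s * r ^ j) * genb n m t r ^ j := by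
  induction j generalizing s with
  | zero => simp
  | succ j ih =>
      rw [pow_succ, mul_assoc, comm_pow, ← mul_assoc, ih (s*r), mul_assoc, ← pow_succ]
      rw [show s * r * r ^ j = s * r ^ (j+1) by rw [pow_succ']; ring]

lemma pow_prod (x y k : ℕ) :
    (gena n m t r ^ x * genb n m t r ^ y) ^ k
      = gena n m t r ^ (x * natGeom (r ^ y) k) * genb n m t r ^ (y * k) := by
  induction k with
  | zero => simp [natGeom]
  | succ k ih =>
      rw [pow_succ, ih, mul_assoc, ← mul_assoc (genb n m t r ^ (y*k)), comm_pow',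
        ← mul_assoc, ← mul_assoc, ← pow_add, mul_assoc, ← pow_add]
      rw [show x * natGeom (r^y) k + x * r ^ (y*k) = x * natGeom (r^y) (k+1) by
        rw [natGeom_succ, pow_mul]; ring]
      rw [show y*k + y = y*(k+1) by ring]

lemma bpow_m (k : ℕ) : genb n m t r ^ (m * k) = gena n m t r ^ (t * k) := by
  rw [pow_mul, pow_mul, relb]

lemma apow_modEq (s s' : ℕ) (h : s ≡ s' [MOD n]) : gena n m t r ^ s = gena n m t r ^ s' := by
  rw [pow_eq_pow_mod s (rela n m t r), pow_eq_pow_mod s' (rela n m t r), h]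

end H

lemma natGeom_cast (s k : ℕ) : ((natGeom s k : ℕ) : ℤ) = geomS (s : ℤ) k := by
  unfold natGeom geomS; push_cast; rfl

section imgs
variable {n m t r : ℕ} (hn : 0 < n) (hm : 0 < m) (ht : 0 < t) (hr : 0 < r)
  (htn : t ∣ n) (hrm : n ∣ r ^ m - 1) (htr : n ∣ t * (r - 1)) (x₁ x₂ y₁ y₂ : ℕ)

include hm hr htn ht hrm in
lemma relA_img (h1 : m ∣ Nat.gcd (Nat.gcd (r-1) n) t * y₁) :
    (gena n m t r ^ x₁ * genb n m t r ^ y₁) ^ n = 1 := by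
  have hdn : Nat.gcd (Nat.gcd (r-1) n) t ∣ n := (Nat.gcd_dvd_left _ _).trans (Nat.gcd_dvd_right _ _)
  have hdt : Nat.gcd (Nat.gcd (r-1) n) t ∣ t := Nat.gcd_dvd_right _ _
  have hyn : m ∣ y₁ * n := h1.trans (by rw [mul_comm]; exact Nat.mul_dvd_mul_left y₁ hdn)
  have hty : m ∣ t * y₁ := h1.trans (Nat.mul_dvd_mul_right hdt y₁)
  rw [pow_prod, ← Nat.mul_div_cancel' hyn, bpow_m, ← pow_add]
  have hd1 : n ∣ x₁ * natGeom (r ^ y₁) n :=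
    Dvd.dvd.mul_left (crux_n n m t r y₁ hm hr htn ht hrm h1 hty) x₁
  have hd2 : n ∣ t * (y₁ * n / m) := by
    have e1 : t * (y₁ * n / m) = t * (y₁ * n) / m := (Nat.mul_div_assoc t hyn).symm
    have e2 : t * (y₁ * n) = (t * y₁) * n := by ring
    have e3 : (t * y₁) * n / m = (t * y₁ / m) * n := by
      rw [mul_comm (t * y₁) n, Nat.mul_div_assoc n hty, mul_comm]
    rw [e1, e2, e3]
    exact dvd_mul_left n (t * y₁ / m)
  obtain ⟨c, hc⟩ := Nat.dvd_add hd1 hd2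
  rw [hc, pow_mul, rela, one_pow]


lemma natModEq_of_int {a b N : ℕ} (h : (a:ℤ) ≡ (b:ℤ) [ZMOD (N:ℤ)]) : a ≡ b [MOD N] := by
  exact_mod_cast Int.natCast_modEq_iff.mp (by exact_mod_cast h)

include hm ht hr htn in
lemma relB_img (hty : m ∣ t * y₁)
    (h2 : (x₂ : ℤ) * geomS ((r : ℤ) ^ y₂) m + (t : ℤ) * (y₂ : ℤ)
          - (x₁ : ℤ) * geomS ((r : ℤ) ^ y₁) t
          - ((t * y₁ / m : ℕ) : ℤ) * (t : ℤ) ≡ 0 [ZMOD (n : ℤ)]) :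
    (gena n m t r ^ x₂ * genb n m t r ^ y₂) ^ m = (gena n m t r ^ x₁ * genb n m t r ^ y₁) ^ t := by
  have hyt : m ∣ y₁ * t := by rwa [mul_comm]
  rw [pow_prod, pow_prod, ← Nat.mul_div_cancel' hyt, bpow_m, ← pow_add,
    show y₂ * m = m * y₂ by ring, bpow_m, ← pow_add]
  apply apow_modEq
  apply natModEq_of_int
  have key : (↑(x₂ * natGeom (r ^ y₂) m + t * y₂) : ℤ) - ↑(x₁ * natGeom (r ^ y₁) t + t * (y₁ * t / m))
      = (x₂ : ℤ) * geomS ((r : ℤ) ^ y₂) m + (t : ℤ) * (y₂ : ℤ)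
          - (x₁ : ℤ) * geomS ((r : ℤ) ^ y₁) t - ((t * y₁ / m : ℕ) : ℤ) * (t : ℤ) := by
    rw [show y₁ * t / m = t * y₁ / m by rw [mul_comm]]
    push_cast [natGeom_cast]
    ring
  have hdvd : (n:ℤ) ∣ (↑(x₂ * natGeom (r ^ y₂) m + t * y₂) : ℤ)
      - ↑(x₁ * natGeom (r ^ y₁) t + t * (y₁ * t / m)) := by
    rw [key]; exact (Int.modEq_zero_iff_dvd).mp h2
  exact (Int.modEq_iff_dvd).mpr (by rw [← neg_sub]; exact dvd_neg.mpr hdvd)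

include hm ht hr htn hrm in
lemma relC_img (hry : m ∣ (r - 1) * y₁)
    (h3 : ((r : ℤ) ^ y₁ - 1) * (x₂ : ℤ)
          + (geomS ((r : ℤ) ^ y₁) r - (r : ℤ) ^ y₂) * (x₁ : ℤ)
          + (((r - 1) * y₁ / m : ℕ) : ℤ) * (t : ℤ) ≡ 0 [ZMOD (n : ℤ)]) :
    (gena n m t r ^ x₂ * genb n m t r ^ y₂) * (gena n m t r ^ x₁ * genb n m t r ^ y₁)
      = (gena n m t r ^ x₁ * genb n m t r ^ y₁) ^ r * (gena n m t r ^ x₂ * genb n m t r ^ y₂) := by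
  set k₃ := (r - 1) * y₁ / m with hk₃
  have hk : (r - 1) * y₁ = m * k₃ := (Nat.mul_div_cancel' hry).symm
  have hyr : y₁ * r = m * k₃ + (y₁ + y₂) - y₂ := by
    have : y₁ * r = y₁ + (r - 1) * y₁ := by
      have : r = 1 + (r - 1) := by omega
      nth_rewrite 1 [this]; ring
    omega
  have hyr' : y₁ * r + y₂ = m * k₃ + (y₁ + y₂) := by omega
  -- LHS
  rw [mul_assoc, ← mul_assoc (genb n m t r ^ y₂), comm_pow', ← mul_assoc, ← mul_assoc,
    ← pow_add, mul_assoc, ← pow_add]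
  -- RHS
  rw [pow_prod, mul_assoc, ← mul_assoc (genb n m t r ^ (y₁ * r)), comm_pow', ← mul_assoc,
    ← mul_assoc, ← pow_add, mul_assoc, ← pow_add, hyr', pow_add (genb n m t r) (m*k₃) (y₁+y₂), bpow_m, ← mul_assoc, ← pow_add]
  rw [show y₂ + y₁ = y₁ + y₂ by ring]
  apply congrArg (· * genb n m t r ^ (y₁ + y₂))
  apply apow_modEq
  apply natModEq_of_int
  have hrm' : ((r:ℤ) ^ m) ≡ 1 [ZMOD (n:ℤ)] := by
    have : ((r ^ m - 1 : ℕ) : ℤ) ≡ 0 [ZMOD (n:ℤ)] := (Int.modEq_zero_iff_dvd).mpr (by exact_mod_cast hrm)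
    have h1 : ((r ^ m - 1 : ℕ) : ℤ) = (r:ℤ)^m - 1 := by
      push_cast [Nat.cast_sub (Nat.one_le_pow _ _ hr)]; ring
    calc ((r:ℤ))^m = ((r ^ m - 1 : ℕ) : ℤ) + 1 := by rw [h1]; ring
      _ ≡ 0 + 1 [ZMOD (n:ℤ)] := this.add_right 1
      _ = 1 := by ring
  rw [Int.modEq_iff_dvd]
  push_cast [natGeom_cast]
  have e1 : y₁ * r = y₁ + m * k₃ := by
    rw [← hk]
    have h1 : 1 + (r-1) = r := by omega
    calc y₁ * r = y₁ * (1 + (r-1)) := by rw [h1]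
      _ = y₁ + (r-1)*y₁ := by ring
  have hrmZ : (n:ℤ) ∣ (r:ℤ)^m - 1 := by
    have := Int.natCast_dvd_natCast.mpr hrm
    rwa [show ((r ^ m - 1 : ℕ) : ℤ) = (r:ℤ)^m - 1 by
      push_cast [Nat.cast_sub (Nat.one_le_pow _ _ hr)]; ring] at this
  have d1 : (n:ℤ) ∣ (r:ℤ)^(y₁ * r) - (r:ℤ)^y₁ := by
    have hd : (n:ℤ) ∣ ((r:ℤ)^m)^k₃ - 1 := by
      have := sub_dvd_pow_sub_pow ((r:ℤ)^m) 1 k₃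
      rw [one_pow] at this
      exact hrmZ.trans (by simpa using this)
    obtain ⟨c, hc⟩ := hd
    refine ⟨(r:ℤ)^y₁ * c, ?_⟩
    rw [e1, pow_add, pow_mul]
    linear_combination (r:ℤ)^y₁ * hc
  have d2 := (Int.modEq_zero_iff_dvd).mp h3
  obtain ⟨c1, hc1⟩ := d1
  obtain ⟨c2, hc2⟩ := d2
  exact ⟨(x₂:ℤ) * c1 + c2, by linear_combination (x₂:ℤ) * hc1 + hc2⟩

end imgs


theorem stmt_8 (n m t r : ℕ) (hn : 0 < n) (hm : 0 < m) (ht : 0 < t) (hr : 0 < r)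
    (htn : t ∣ n) (hrm : n ∣ r ^ m - 1) (htr : n ∣ t * (r - 1))
    (x₁ x₂ y₁ y₂ : ℕ) :
    (∃ σ : MetaGroup n m t r →* MetaGroup n m t r,
        σ (gena n m t r) = gena n m t r ^ x₁ * genb n m t r ^ y₁ ∧
        σ (genb n m t r) = gena n m t r ^ x₂ * genb n m t r ^ y₂) ↔
      (m ∣ Nat.gcd (Nat.gcd (r - 1) n) t * y₁ ∧
       ((x₂ : ℤ) * geomS ((r : ℤ) ^ y₂) m + (t : ℤ) * (y₂ : ℤ)
          - (x₁ : ℤ) * geomS ((r : ℤ) ^ y₁) t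
          - ((t * y₁ / m : ℕ) : ℤ) * (t : ℤ) ≡ 0 [ZMOD (n : ℤ)]) ∧
       (((r : ℤ) ^ y₁ - 1) * (x₂ : ℤ)
          + (geomS ((r : ℤ) ^ y₁) r - (r : ℤ) ^ y₂) * (x₁ : ℤ)
          + (((r - 1) * y₁ / m : ℕ) : ℤ) * (t : ℤ) ≡ 0 [ZMOD (n : ℤ)])) := by
  constructor
  · rintro ⟨σ, hσa, hσb⟩
    -- set up the model group
    have hr1 : 1 ≤ r := hr
    have hrm1 : (r : ZMod n) ^ m = 1 := by
      have h0 : ((r ^ m - 1 : ℕ) : ZMod n) = 0 := by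
        rw [ZMod.natCast_eq_zero_iff]; exact hrm
      have h1 : r ^ m = (r ^ m - 1) + 1 := by
        have := Nat.one_le_pow m r hr; omega
      calc (r:ZMod n)^m = ((r^m : ℕ) : ZMod n) := by push_cast; rfl
        _ = ((r^m - 1 : ℕ) : ZMod n) + 1 := by rw [h1]; push_cast; ring
        _ = 1 := by rw [h0]; ring
    have hmm : (m - 1) + 1 = m := by omega
    set u : (ZMod n)ˣ := ⟨(r:ZMod n), (r:ZMod n)^(m-1),
      by rw [← pow_succ', hmm]; exact hrm1,
      by rw [← pow_succ, hmm]; exact hrm1⟩ with hudef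
    have hu : (u : ZMod n) = r := rfl
    have hum : u ^ m = 1 := by
      ext
      rw [Units.val_pow_eq_pow_val, hu, hrm1, Units.val_one]
    have hut : (t : ZMod n) * u = t := by
      have h0 : ((t * (r-1) : ℕ) : ZMod n) = 0 := by
        rw [ZMod.natCast_eq_zero_iff]; exact htr
      have h1 : ((t * (r-1) : ℕ) : ZMod n) = (t : ZMod n) * (r : ZMod n) - t := by
        push_cast [Nat.cast_sub hr1]; ring
      rw [hu]
      have h2 := h1 ▸ h0
      linear_combination h2
    haveI := KE.z0_normal hum hut
    set π : KE n u →* KE n u ⧸ Subgroup.zpowers (KE.z0 u t m) :=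
      QuotientGroup.mk' (Subgroup.zpowers (KE.z0 u t m)) with hπ
    have hπapp : ∀ P : KE n u, π P = QuotientGroup.mk P := fun _ => rfl
    have uzpow_cast : ∀ y : ℕ, ((u ^ (y:ℤ) : (ZMod n)ˣ) : ZMod n) = (r : ZMod n) ^ y := by
      intro y
      rw [zpow_natCast, Units.val_pow_eq_pow_val, hu]
    have geomS_cast : ∀ y k : ℕ,
        ((geomS ((r:ℤ)^y) k : ℤ) : ZMod n)
          = ∑ i ∈ Finset.range k, ((u ^ (y:ℤ) : (ZMod n)ˣ) : ZMod n) ^ i := by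
      intro y k
      unfold geomS
      push_cast
      exact Finset.sum_congr rfl fun i _ => by rw [uzpow_cast]
    set PA : KE n u := ⟨1, 0⟩ with hPA
    set PB : KE n u := ⟨0, 1⟩ with hPB
    have hPApow : ∀ k : ℕ, PA ^ k = (⟨(k : ZMod n), 0⟩ : KE n u) := by
      intro k
      rw [hPA, KE.pow_formula]
      refine KE.ext' ?_ (by simp)
      show 1 * ∑ i ∈ Finset.range k, ((u ^ (0:ℤ) : (ZMod n)ˣ) : ZMod n) ^ i = (k : ZMod n)
      simp
    have hPBpow : ∀ k : ℕ, PB ^ k = (⟨0, (k : ℤ)⟩ : KE n u) := by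
      intro k
      rw [hPB, KE.pow_formula]
      exact KE.ext' (by simp) (by simp)
    have hProd : ∀ x y : ℕ, PA ^ x * PB ^ y = (⟨(x : ZMod n), (y:ℤ)⟩ : KE n u) := by
      intro x y
      rw [hPApow, hPBpow, KE.mul_def]
      exact KE.ext' (by simp) (by simp)
    have hrelsF : ∀ ρ ∈ metaRels n m t r, FreeGroup.lift ![π PA, π PB] ρ = 1 := by
      intro ρ hρ
      simp only [metaRels, Set.mem_insert_iff, Set.mem_singleton_iff] at hρ
      rcases hρ with rfl | rfl | rfl
      · rw [map_pow, FreeGroup.lift_apply_of]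
        simp only [Matrix.cons_val_zero]
        rw [← map_pow, hPApow n, show ((n : ZMod n) = 0) from ZMod.natCast_self n,
          show ((⟨0, 0⟩ : KE n u) = 1) from rfl, map_one]
      · rw [map_mul, map_inv, map_pow, map_pow, FreeGroup.lift_apply_of, FreeGroup.lift_apply_of]
        simp only [Matrix.cons_val_zero, Matrix.cons_val_one, Matrix.head_cons]
        rw [← map_pow, ← map_pow, hPBpow m, hPApow t, mul_inv_eq_one, hπapp, hπapp]
        exact ((KE.mk_iff hum hut _ _).mpr ⟨1, by push_cast; ring, by push_cast; ring⟩).symm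
      · rw [map_mul, map_mul, map_mul, map_inv, map_inv, map_pow,
          FreeGroup.lift_apply_of, FreeGroup.lift_apply_of]
        simp only [Matrix.cons_val_zero, Matrix.cons_val_one, Matrix.head_cons]
        have hconj : PB * PA * PB⁻¹ = PA ^ r := by
          rw [hPApow r, hPB, hPA, KE.mul_def, KE.inv_def, KE.mul_def]
          refine KE.ext' ?_ (by simp)
          show (0 : ZMod n) + ↑(u ^ (1:ℤ)) * 1 + ↑(u ^ ((1:ℤ) + 0)) * -(↑(u ^ (-(1:ℤ))) * 0)
              = (r : ZMod n)
          simp [hu]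
        rw [← map_inv, ← map_pow, ← map_inv, ← map_mul, ← map_mul, ← map_mul, hconj,
          mul_inv_cancel, map_one]
    set F := PresentedGroup.toGroup hrelsF with hF
    have hFa : F (gena n m t r) = π PA := by
      rw [hF]
      show PresentedGroup.toGroup hrelsF (PresentedGroup.of 0) = π PA
      rw [PresentedGroup.toGroup.of]
      simp
    have hFb : F (genb n m t r) = π PB := by
      rw [hF]
      show PresentedGroup.toGroup hrelsF (PresentedGroup.of 1) = π PB
      rw [PresentedGroup.toGroup.of]
      simp
    have hFimg : ∀ x y : ℕ, F (gena n m t r ^ x * genb n m t r ^ y)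
        = π (⟨(x : ZMod n), (y:ℤ)⟩ : KE n u) := by
      intro x y
      rw [map_mul, map_pow, map_pow, hFa, hFb, ← map_pow, ← map_pow, ← map_mul, hProd]
    have hA : π ((⟨(x₁ : ZMod n), (y₁:ℤ)⟩ : KE n u) ^ n) = π 1 := by
      rw [map_pow, ← hFimg, ← map_pow, map_one, ← hσa, ← map_pow, rela, map_one, map_one]
    have hB : π ((⟨(x₂ : ZMod n), (y₂:ℤ)⟩ : KE n u) ^ m)
        = π ((⟨(x₁ : ZMod n), (y₁:ℤ)⟩ : KE n u) ^ t) := by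
      rw [map_pow, map_pow, ← hFimg, ← hFimg, ← map_pow, ← map_pow, ← hσa, ← hσb,
        ← map_pow, ← map_pow, relb]
    have hC : π ((⟨(x₂ : ZMod n), (y₂:ℤ)⟩ : KE n u) * (⟨(x₁ : ZMod n), (y₁:ℤ)⟩ : KE n u))
        = π ((⟨(x₁ : ZMod n), (y₁:ℤ)⟩ : KE n u) ^ r * (⟨(x₂ : ZMod n), (y₂:ℤ)⟩ : KE n u)) := by
      rw [map_mul, map_mul, map_pow, ← hFimg, ← hFimg, ← map_pow, ← map_mul, ← map_mul,
        ← hσa, ← hσb, ← map_pow, ← map_mul, ← map_mul, relc]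
    rw [KE.pow_formula, hπapp, hπapp, KE.mk_iff hum hut] at hA
    obtain ⟨k₁, hx1, hj1⟩ := hA
    rw [KE.pow_formula, KE.pow_formula, hπapp, hπapp, KE.mk_iff hum hut] at hB
    obtain ⟨k₂, hx2, hj2⟩ := hB
    rw [KE.pow_formula, KE.mul_def, KE.mul_def, hπapp, hπapp, KE.mk_iff hum hut] at hC
    obtain ⟨k₃, hx3, hj3⟩ := hC
    simp only [KE.one_def] at hx1 hj1
    dsimp only at hx1 hj1 hx2 hj2 hx3 hj3
    have hny : m ∣ n * y₁ := by
      have h5 : ((n * y₁ : ℕ) : ℤ) = m * (-k₁) := by push_cast; linarith [hj1]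
      exact Int.natCast_dvd_natCast.mp ⟨-k₁, by exact_mod_cast h5⟩
    have hty : m ∣ t * y₁ := by
      have h5 : ((t * y₁ : ℕ) : ℤ) = m * (y₂ + k₂) := by push_cast; linarith [hj2]
      exact Int.natCast_dvd_natCast.mp ⟨y₂ + k₂, by exact_mod_cast h5⟩
    have hry : m ∣ (r - 1) * y₁ := by
      have h5 : (((r-1) * y₁ : ℕ) : ℤ) = m * k₃ := by
        push_cast [Nat.cast_sub hr1]; linarith [hj3]
      exact Int.natCast_dvd_natCast.mp ⟨k₃, by exact_mod_cast h5⟩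
    refine ⟨?_, ?_, ?_⟩
    · rw [show Nat.gcd (Nat.gcd (r-1) n) t * y₁
          = Nat.gcd (Nat.gcd ((r-1) * y₁) (n * y₁)) (t * y₁) by
        rw [Nat.gcd_mul_right, Nat.gcd_mul_right]]
      exact Nat.dvd_gcd (Nat.dvd_gcd hry hny) hty
    · -- condition (2)
      have hdiv : ((t * y₁ / m : ℕ) : ℤ) = (y₂ : ℤ) + k₂ := by
        have h5 : (m : ℤ) * ((t * y₁ / m : ℕ) : ℤ) = (m:ℤ) * ((y₂:ℤ) + k₂) := by
          rw [show (m : ℤ) * ((t * y₁ / m : ℕ) : ℤ)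
              = ((m * (t * y₁ / m) : ℕ) : ℤ) by push_cast; ring,
            Nat.mul_div_cancel' hty]
          push_cast; linarith [hj2]
        exact mul_left_cancel₀ (by exact_mod_cast hm.ne') h5
      have hdivZ : ((t * y₁ / m : ℕ) : ZMod n) = (y₂ : ZMod n) + ((k₂ : ℤ) : ZMod n) := by
        have h6 := congrArg (Int.cast : ℤ → ZMod n) hdiv
        rw [Int.cast_add, Int.cast_natCast, Int.cast_natCast] at h6
        exact h6
      apply (Int.modEq_zero_iff_dvd).mpr
      rw [← ZMod.intCast_zmod_eq_zero_iff_dvd]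
      rw [hdiv]
      push_cast [geomS_cast]
      linear_combination (-1 : ZMod n) * hx2
    · -- condition (3)
      have e3 : (r:ℤ) * (y₁:ℤ) = (y₁:ℤ) + k₃ * m := by linarith [hj3]
      have hdiv3 : (((r-1) * y₁ / m : ℕ) : ℤ) = k₃ := by
        have h5 : (m:ℤ) * (((r-1) * y₁ / m : ℕ) : ℤ) = (m:ℤ) * k₃ := by
          rw [show (m : ℤ) * (((r-1) * y₁ / m : ℕ) : ℤ)
              = (((m * ((r-1) * y₁ / m)) : ℕ) : ℤ) by push_cast; ring,
            Nat.mul_div_cancel' hry]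
          push_cast [Nat.cast_sub hr1]
          linarith [hj3]
        exact mul_left_cancel₀ (by exact_mod_cast hm.ne') h5
      have hupow : (u ^ ((r:ℤ) * (y₁:ℤ)) : (ZMod n)ˣ) = u ^ ((y₁:ℕ):ℤ) := by
        rw [e3, zpow_add, KE.upow_mul_m hum, mul_one]
      rw [hupow, uzpow_cast, uzpow_cast] at hx3
      have hdiv3Z : (((r-1) * y₁ / m : ℕ) : ZMod n) = ((k₃ : ℤ) : ZMod n) := by
        have h6 := congrArg (Int.cast : ℤ → ZMod n) hdiv3
        rw [Int.cast_natCast] at h6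
        exact h6
      apply (Int.modEq_zero_iff_dvd).mpr
      rw [← ZMod.intCast_zmod_eq_zero_iff_dvd]
      rw [hdiv3]
      push_cast [geomS_cast]
      linear_combination hx3
  · rintro ⟨h1, h2, h3⟩
    have hdt : Nat.gcd (Nat.gcd (r-1) n) t ∣ t := Nat.gcd_dvd_right _ _
    have hdr : Nat.gcd (Nat.gcd (r-1) n) t ∣ (r-1) :=
      (Nat.gcd_dvd_left _ _).trans (Nat.gcd_dvd_left _ _)
    have hty : m ∣ t * y₁ := h1.trans (Nat.mul_dvd_mul_right hdt y₁)
    have hry : m ∣ (r-1) * y₁ := h1.trans (Nat.mul_dvd_mul_right hdr y₁)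
    have hrels : ∀ ρ ∈ metaRels n m t r,
        FreeGroup.lift ![gena n m t r ^ x₁ * genb n m t r ^ y₁,
          gena n m t r ^ x₂ * genb n m t r ^ y₂] ρ = 1 := by
      intro ρ hρ
      simp only [metaRels, Set.mem_insert_iff, Set.mem_singleton_iff] at hρ
      rcases hρ with rfl | rfl | rfl
      · rw [map_pow, FreeGroup.lift_apply_of]
        simp only [Matrix.cons_val_zero]
        exact relA_img hm ht hr htn hrm x₁ y₁ h1
      · rw [map_mul, map_inv, map_pow, map_pow, FreeGroup.lift_apply_of, FreeGroup.lift_apply_of]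
        simp only [Matrix.cons_val_zero, Matrix.cons_val_one, Matrix.head_cons]
        rw [relB_img hm ht hr htn x₁ x₂ y₁ y₂ hty h2]
        simp
      · rw [map_mul, map_mul, map_mul, map_inv, map_inv, map_pow,
          FreeGroup.lift_apply_of, FreeGroup.lift_apply_of]
        simp only [Matrix.cons_val_zero, Matrix.cons_val_one, Matrix.head_cons]
        rw [relC_img hm ht hr htn hrm x₁ x₂ y₁ y₂ hry h3]
        group
    refine ⟨PresentedGroup.toGroup hrels, ?_, ?_⟩
    · show PresentedGroup.toGroup hrels (PresentedGroup.of 0) = _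
      rw [PresentedGroup.toGroup.of]
      simp
    · show PresentedGroup.toGroup hrels (PresentedGroup.of 1) = _
      rw [PresentedGroup.toGroup.of]
      simp
end

section
/- Let p be a prime dividing n but not dividing r−1, and let α_p = deg_p(n). Let x₁, x₂, y₁, y₂ be nonnegative integers such that m divides t·y₁ and m divides (r−1)·y₁, and such that p does not divide (r^{y₁}−1)·x₂ − (r^{y₂}−1)·x₁. Then p ≠ 2, and the two congruences x₂·[m]_{r^{y₂}} + t·y₂ − x₁·[t]_{r^{y₁}} − (t·y₁/m)·t ≡ 0 (mod p^{α_p}) and (r^{y₁}−1)·x₂ + ([r]_{r^{y₁}} − r^{y₂})·x₁ + ((r−1)·y₁/m)·t ≡ 0 (mod p^{α_p}) hold simultaneously if and only if r^{y₁} ≡ 1 (mod p^{α_p}) and r^{y₂} ≡ r (mod p^{α_p}). -/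
lemma geomS_succ (s : ℤ) (k : ℕ) : geomS s (k + 1) = geomS s k + s ^ k := by
  simp [geomS, Finset.sum_range_succ]

lemma geomS_one (k : ℕ) : geomS 1 k = (k : ℤ) := by simp [geomS]

lemma sub_one_mul_geomS (s : ℤ) (k : ℕ) : (s - 1) * geomS s k = s ^ k - 1 := by
  rw [geomS, mul_comm, geom_sum_mul]

lemma geomS_congr {n a b : ℤ} (h : a ≡ b [ZMOD n]) (k : ℕ) :
    geomS a k ≡ geomS b k [ZMOD n] := by
  induction k with
  | zero => rfl
  | succ k ih => rw [geomS_succ, geomS_succ]; exact ih.add (h.pow k)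

lemma modEq_of_dvd_sub' {n a b : ℤ} (h : n ∣ a - b) : a ≡ b [ZMOD n] := by
  rw [Int.modEq_iff_dvd]; exact dvd_sub_comm.mp h

lemma dvd_sub_of_modEq' {n a b : ℤ} (h : a ≡ b [ZMOD n]) : n ∣ a - b :=
  dvd_sub_comm.mp h.dvd

theorem stmt_13 (n m t r : ℕ) (hn : 0 < n) (hm : 0 < m) (ht : 0 < t) (hr : 0 < r)
    (htn : t ∣ n) (hrm : n ∣ r ^ m - 1) (htr : n ∣ t * (r - 1))
    (p α : ℕ) (hp : p.Prime) (hpn : p ∣ n) (hpr : ¬ p ∣ (r - 1))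
    (hα1 : p ^ α ∣ n) (hα2 : ¬ p ^ (α + 1) ∣ n)
    (x₁ x₂ y₁ y₂ : ℕ) (hty : m ∣ t * y₁) (hry : m ∣ (r - 1) * y₁)
    (hinj : ¬ (p : ℤ) ∣ (((r : ℤ) ^ y₁ - 1) * (x₂ : ℤ) - ((r : ℤ) ^ y₂ - 1) * (x₁ : ℤ))) :
    p ≠ 2 ∧
    ((((x₂ : ℤ) * geomS ((r : ℤ) ^ y₂) m + (t : ℤ) * (y₂ : ℤ)
          - (x₁ : ℤ) * geomS ((r : ℤ) ^ y₁) t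
          - ((t * y₁ / m : ℕ) : ℤ) * (t : ℤ) ≡ 0 [ZMOD (p : ℤ) ^ α]) ∧
      (((r : ℤ) ^ y₁ - 1) * (x₂ : ℤ)
          + (geomS ((r : ℤ) ^ y₁) r - (r : ℤ) ^ y₂) * (x₁ : ℤ)
          + (((r - 1) * y₁ / m : ℕ) : ℤ) * (t : ℤ) ≡ 0 [ZMOD (p : ℤ) ^ α])) ↔
     (((r : ℤ) ^ y₁ ≡ 1 [ZMOD (p : ℤ) ^ α]) ∧
      ((r : ℤ) ^ y₂ ≡ (r : ℤ) [ZMOD (p : ℤ) ^ α]))) := by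
  -- basic facts
  have hr2 : 2 ≤ r := by
    rcases Nat.lt_or_ge r 2 with h | h
    · interval_cases r
      · exact absurd (dvd_zero p) hpr
    · exact h
  have hα0 : 1 ≤ α := by
    by_contra h
    have : α = 0 := by omega
    subst this
    exact hα2 (by simpa using hpn)
  set q : ℤ := (p : ℤ) ^ α with hqdef
  set R : ℤ := (r : ℤ) with hRdef
  set a : ℤ := R ^ y₁ with hadef
  set b : ℤ := R ^ y₂ with hbdef
  have hq_n : q ∣ (n : ℤ) := by
    have := Int.natCast_dvd_natCast.mpr hα1
    push_cast at this
    exact this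
  have hrm1 : (1 : ℕ) ≤ r ^ m := Nat.one_le_pow _ _ hr
  have hq_rm : q ∣ R ^ m - 1 := by
    have := Int.natCast_dvd_natCast.mpr hrm
    rw [Nat.cast_sub hrm1] at this
    push_cast at this
    exact hq_n.trans this
  have hq_t : q ∣ (t : ℤ) := by
    have h1 : p ^ α ∣ t * (r - 1) := hα1.trans htr
    have hcop : Nat.Coprime (p ^ α) (r - 1) :=
      (Nat.Coprime.pow_left _ ((Nat.Prime.coprime_iff_not_dvd hp).mpr hpr))
    have := (Nat.Coprime.dvd_of_dvd_mul_right hcop h1)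
    have := Int.natCast_dvd_natCast.mpr this
    push_cast at this
    exact this
  have hpR1 : ¬ (p : ℤ) ∣ (R - 1) := by
    intro h
    apply hpr
    have : ((r - 1 : ℕ) : ℤ) = R - 1 := by
      rw [Nat.cast_sub (by omega : 1 ≤ r)]; simp [hRdef]
    rw [← this] at h
    exact_mod_cast h
  have hprime : Prime ((p : ℤ)) := Nat.prime_iff_prime_int.mp hp
  have hcop_q : ∀ x : ℤ, ¬ (p : ℤ) ∣ x → IsCoprime q x := fun x hx =>
    IsCoprime.pow_left ((hprime.coprime_iff_not_dvd).mpr hx)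
  have hpq : (p : ℤ) ∣ q := by
    rw [hqdef]
    exact dvd_pow_self _ (by omega)
  -- p ≠ 2
  have hp2 : p ≠ 2 := by
    intro h
    subst h
    have h2n : 2 ∣ r ^ m - 1 := hpn.trans hrm
    have h2r : 2 ∣ r := by omega
    have : 2 ∣ r ^ m := h2r.trans (dvd_pow_self r (by omega : m ≠ 0))
    omega
  refine ⟨hp2, ?_⟩
  -- key: q ∣ a^(r-1) - 1
  have ha_r1 : q ∣ a ^ (r - 1) - 1 := by
    obtain ⟨c, hc⟩ := hry
    have h1 : a ^ (r - 1) = (R ^ m) ^ c := by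
      rw [hadef, ← pow_mul, ← pow_mul, Nat.mul_comm y₁, hc]
    rw [h1]
    exact hq_rm.trans ⟨geomS (R ^ m) c, (sub_one_mul_geomS _ c).symm⟩
  -- q ∣ b^m - 1 not needed
  have hgeomSr : q ∣ geomS R m := by
    have h1 : (R - 1) * geomS R m = R ^ m - 1 := sub_one_mul_geomS _ _
    have hcop := hcop_q (R - 1) hpR1
    exact hcop.dvd_of_dvd_mul_left (by rw [h1]; exact hq_rm)
  constructor
  · rintro ⟨hC1, hC2⟩
    rw [Int.modEq_zero_iff_dvd] at hC1 hC2
    -- strip the t-multiples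
    have hD2 : q ∣ (a - 1) * x₂ + (geomS a r - b) * x₁ := by
      have h3 : q ∣ (((r - 1) * y₁ / m : ℕ) : ℤ) * (t : ℤ) := hq_t.mul_left _
      have := dvd_sub hC2 h3
      simpa using this
    -- Step A : p ∣ a - 1
    have hpa : (p : ℤ) ∣ a - 1 := by
      by_contra hpa
      have hcop := hcop_q (a - 1) hpa
      have h1 : q ∣ geomS a (r - 1) := by
        apply hcop.dvd_of_dvd_mul_left
        rw [sub_one_mul_geomS]
        exact ha_r1
      have h2 : geomS a r = geomS a (r - 1) + a ^ (r - 1) := by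
        conv_lhs => rw [show r = (r - 1) + 1 from by omega]
        rw [geomS_succ]
      have h3 : q ∣ geomS a r - 1 := by
        rw [h2]
        have h6 := dvd_add h1 ha_r1
        have he : geomS a (r - 1) + (a ^ (r - 1) - 1)
            = geomS a (r - 1) + a ^ (r - 1) - 1 := by ring
        rwa [he] at h6
      -- then q ∣ (a-1)x₂ - (b-1)x₁
      have h4 : q ∣ (a - 1) * x₂ - (b - 1) * x₁ := by
        have h5 : q ∣ (geomS a r - 1) * x₁ := h3.mul_right _
        have := dvd_sub hD2 h5
        have he : (a - 1) * ↑x₂ + (geomS a r - b) * ↑x₁ - (geomS a r - 1) * ↑x₁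
            = (a - 1) * ↑x₂ - (b - 1) * ↑x₁ := by ring
        rwa [he] at this
      exact hinj (hpq.trans h4)
    -- Step B : q ∣ a - 1
    have hqa : q ∣ a - 1 := by
      have hgc : geomS a (r - 1) ≡ geomS 1 (r - 1) [ZMOD (p : ℤ)] :=
        geomS_congr (modEq_of_dvd_sub' hpa) _
      have hnd : ¬ (p : ℤ) ∣ geomS a (r - 1) := by
        intro hd
        have hd2 := dvd_sub_of_modEq' hgc
        have : (p : ℤ) ∣ geomS 1 (r - 1) := by
          have := dvd_sub hd hd2
          simpa using this
        rw [geomS_one] at this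
        apply hpR1
        have hcast : ((r - 1 : ℕ) : ℤ) = R - 1 := by
          rw [Nat.cast_sub (by omega : 1 ≤ r)]; simp [hRdef]
        rwa [hcast] at this
      have hcop := hcop_q _ hnd
      apply hcop.dvd_of_dvd_mul_right
      rw [sub_one_mul_geomS]
      exact ha_r1
    have hamod : a ≡ 1 [ZMOD q] := modEq_of_dvd_sub' hqa
    refine ⟨hamod, ?_⟩
    -- Step C : q ∣ b - r
    have hgr : geomS a r ≡ (r : ℤ) [ZMOD q] := by
      have := geomS_congr hamod r
      rwa [geomS_one] at this
    have h6 : q ∣ (R - b) * x₁ := by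
      have h7 : q ∣ (a - 1) * x₂ := hqa.mul_right _
      have h8 : q ∣ (geomS a r - R) * x₁ := (Int.ModEq.dvd hgr.symm).mul_right _
      have := dvd_sub (dvd_sub hD2 h7) h8
      have he : (a - 1) * ↑x₂ + (geomS a r - b) * ↑x₁ - (a - 1) * ↑x₂ -
          (geomS a r - R) * ↑x₁ = (R - b) * ↑x₁ := by ring
      rwa [he] at this
    have hpx1 : ¬ (p : ℤ) ∣ (x₁ : ℤ) := by
      intro hd
      apply hinj
      exact dvd_sub (hpa.mul_right _) (hd.mul_left _)
    have hqb : q ∣ R - b := (hcop_q _ hpx1).dvd_of_dvd_mul_right h6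
    exact modEq_of_dvd_sub' (dvd_sub_comm.mp hqb)
  · rintro ⟨h1, h2⟩
    have hqa : q ∣ a - 1 := dvd_sub_of_modEq' h1
    have hqb : q ∣ b - R := dvd_sub_of_modEq' h2
    have hgr : geomS a r ≡ (r : ℤ) [ZMOD q] := by
      have := geomS_congr (modEq_of_dvd_sub' hqa) r
      rwa [geomS_one] at this
    have hgt : geomS a t ≡ (t : ℤ) [ZMOD q] := by
      have := geomS_congr (modEq_of_dvd_sub' hqa) t
      rwa [geomS_one] at this
    have hgb : q ∣ geomS b m := by
      have hcong : geomS b m ≡ geomS R m [ZMOD q] :=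
        geomS_congr (modEq_of_dvd_sub' hqb) m
      have h3 : q ∣ geomS b m - geomS R m := dvd_sub_of_modEq' hcong
      have := dvd_add h3 hgeomSr
      simpa using this
    constructor
    · rw [Int.modEq_zero_iff_dvd]
      have t1 : q ∣ (x₂ : ℤ) * geomS b m := hgb.mul_left _
      have t2 : q ∣ (t : ℤ) * (y₂ : ℤ) := hq_t.mul_right _
      have t3 : q ∣ (x₁ : ℤ) * geomS a t := by
        have h4 : q ∣ geomS a t := by
          have h5 : q ∣ geomS a t - t := dvd_sub_of_modEq' hgt
          have := dvd_add h5 hq_t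
          simpa using this
        exact h4.mul_left _
      have t4 : q ∣ ((t * y₁ / m : ℕ) : ℤ) * (t : ℤ) := hq_t.mul_left _
      exact dvd_sub (dvd_sub (dvd_add t1 t2) t3) t4
    · rw [Int.modEq_zero_iff_dvd]
      have t1 : q ∣ (a - 1) * x₂ := hqa.mul_right _
      have t2 : q ∣ (geomS a r - b) * x₁ := by
        have h4 : q ∣ geomS a r - b := by
          have h5 : q ∣ geomS a r - R := dvd_sub_of_modEq' hgr
          have := dvd_sub h5 hqb
          have he : geomS a r - R - (b - R) = geomS a r - b := by ring
          rwa [he] at this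
        exact h4.mul_right _
      have t3 : q ∣ (((r - 1) * y₁ / m : ℕ) : ℤ) * (t : ℤ) := hq_t.mul_left _
      exact dvd_add (dvd_add t1 t2) t3
end

section
/- Assume 2 divides n and set α₂ = deg₂(n), β₂ = deg₂(m), γ₂ = deg₂(t), δ₂ = deg₂(r−1). Suppose δ₂ = γ₂ = 1, α₂ = 2 and β₂ > 1. Let x₁, x₂, y₁, y₂ be nonnegative integers with gcd(gcd(r−1,n), t)·y₁ ≡ 0 (mod m) and x₁y₂ − x₂y₁ odd. Then the two congruences x₂·[m]_{r^{y₂}} + t·y₂ − x₁·[t]_{r^{y₁}} − (t·y₁/m)·t ≡ 0 (mod 2^{α₂}) and (r^{y₁}−1)·x₂ + ([r]_{r^{y₁}} − r^{y₂})·x₁ + ((r−1)·y₁/m)·t ≡ 0 (mod 2^{α₂}) hold simultaneously if and only if 2^{β₂} divides y₁. -/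
lemma geom_pair (s : ZMod 4) (hs : s * s = 1) (j : ℕ) :
    ∑ i ∈ Finset.range (2 * j), s ^ i = (j : ZMod 4) * (1 + s) := by
  induction j with
  | zero => simp
  | succ j ih =>
    have h1 : 2 * (j + 1) = (2 * j) + 1 + 1 := by ring
    rw [h1, Finset.sum_range_succ, Finset.sum_range_succ, ih]
    have h2 : s ^ (2 * j) = 1 := by
      rw [pow_mul, pow_two, hs, one_pow]
    rw [pow_succ, h2]
    push_cast
    ring

lemma par_lemma (β m' a y q : ℕ) (hm' : ¬ 2 ∣ m') (ha : ¬ 2 ∣ a)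
    (hq : q * (2 ^ β * m') = 2 * (a * y)) : (2 ∣ q ↔ 2 ^ β ∣ y) := by
  constructor
  · rintro ⟨q', rfl⟩
    have h2 : q' * (2 ^ β * m') = a * y := by
      have h := hq
      rw [show 2 * q' * (2 ^ β * m') = 2 * (q' * (2 ^ β * m')) by ring] at h
      exact Nat.eq_of_mul_eq_mul_left (by norm_num) h
    have h3 : 2 ^ β ∣ a * y := ⟨q' * m', by rw [← h2]; ring⟩
    have hcop : Nat.Coprime (2 ^ β) a := by
      apply Nat.Coprime.pow_left
      exact (Nat.Prime.coprime_iff_not_dvd Nat.prime_two).2 ha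
    exact Nat.Coprime.dvd_of_dvd_mul_left hcop h3
  · rintro ⟨y', rfl⟩
    have h2 : q * m' = 2 * (a * y') := by
      have hpow : 0 < 2 ^ β := Nat.pow_pos (by norm_num)
      have h : (q * m') * 2 ^ β = (2 * (a * y')) * 2 ^ β := by
        rw [show q * m' * 2 ^ β = q * (2 ^ β * m') by ring, hq]; ring
      exact Nat.eq_of_mul_eq_mul_right hpow h
    have h3 : 2 ∣ q * m' := ⟨a * y', h2⟩
    rcases (Nat.Prime.dvd_mul Nat.prime_two).1 h3 with h | h
    · exact h
    · exact absurd h hm'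

lemma zmod4_iff (a : ℤ) : (a ≡ 0 [ZMOD (2:ℤ)^2]) ↔ ((a : ZMod 4) = 0) := by
  rw [show ((2:ℤ)^2) = ((4:ℕ):ℤ) by norm_num,
    ZMod.intCast_zmod_eq_zero_iff_dvd]
  exact Int.modEq_zero_iff_dvd

lemma geomS_cast (r y k : ℕ) :
    (((geomS ((r:ℤ)^y) k) : ℤ) : ZMod 4) = ∑ i ∈ Finset.range k, ((r : ZMod 4)^y)^i := by
  unfold geomS; push_cast; rfl

theorem stmt_15 (n m t r : ℕ) (hn : 0 < n) (hm : 0 < m) (ht : 0 < t) (hr : 0 < r)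
    (htn : t ∣ n) (hrm : n ∣ r ^ m - 1) (htr : n ∣ t * (r - 1))
    (h2n : 2 ∣ n)
    (α₂ β₂ γ₂ δ₂ : ℕ)
    (hα1 : 2 ^ α₂ ∣ n) (hα2 : ¬ 2 ^ (α₂ + 1) ∣ n)
    (hβ1 : 2 ^ β₂ ∣ m) (hβ2 : ¬ 2 ^ (β₂ + 1) ∣ m)
    (hγ1 : 2 ^ γ₂ ∣ t) (hγ2 : ¬ 2 ^ (γ₂ + 1) ∣ t)
    (hδ1 : 2 ^ δ₂ ∣ (r - 1)) (hδ2 : ¬ 2 ^ (δ₂ + 1) ∣ (r - 1))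
    (hδ : δ₂ = 1) (hγ : γ₂ = 1) (hα : α₂ = 2) (hβ : 1 < β₂)
    (x₁ x₂ y₁ y₂ : ℕ)
    (hy : m ∣ Nat.gcd (Nat.gcd (r - 1) n) t * y₁)
    (hodd : ¬ (2 : ℤ) ∣ ((x₁ : ℤ) * (y₂ : ℤ) - (x₂ : ℤ) * (y₁ : ℤ))) :
    (((x₂ : ℤ) * geomS ((r : ℤ) ^ y₂) m + (t : ℤ) * (y₂ : ℤ)
          - (x₁ : ℤ) * geomS ((r : ℤ) ^ y₁) t
          - ((t * y₁ / m : ℕ) : ℤ) * (t : ℤ) ≡ 0 [ZMOD (2 : ℤ) ^ α₂]) ∧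
     (((r : ℤ) ^ y₁ - 1) * (x₂ : ℤ)
          + (geomS ((r : ℤ) ^ y₁) r - (r : ℤ) ^ y₂) * (x₁ : ℤ)
          + (((r - 1) * y₁ / m : ℕ) : ℤ) * (t : ℤ) ≡ 0 [ZMOD (2 : ℤ) ^ α₂])) ↔
    2 ^ β₂ ∣ y₁ := by
  subst hα hγ hδ
  norm_num at hγ1 hγ2 hδ1 hδ2
  -- basic residues
  have ht4 : t % 4 = 2 := by omega
  have hr4 : r % 4 = 3 := by omega
  have hm4 : 4 ∣ m := dvd_trans (pow_dvd_pow 2 hβ) hβ1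
  -- gcd facts
  set g := Nat.gcd (Nat.gcd (r - 1) n) t with hg
  have hgt : g ∣ t := Nat.gcd_dvd_right _ _
  have hgr : g ∣ r - 1 := (Nat.gcd_dvd_left _ _).trans (Nat.gcd_dvd_left _ _)
  have h2g : 2 ∣ g := Nat.dvd_gcd (Nat.dvd_gcd hδ1 h2n) (by omega)
  obtain ⟨g', hgg'⟩ := h2g
  have hg'odd : ¬ 2 ∣ g' := by
    rintro ⟨c, rfl⟩
    have : 4 ∣ t := dvd_trans ⟨c, by omega⟩ hgt
    omega
  -- y₁ is even
  have h2y₁ : 2 ∣ y₁ := by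
    have h4 : 4 ∣ g * y₁ := dvd_trans hm4 hy
    obtain ⟨c, hc⟩ := h4
    have hgy : g' * y₁ = 2 * c := by
      have h22 : 2 * (g' * y₁) = 4 * c := by rw [← hc, hgg']; ring
      omega
    have hgy : g' * y₁ = 2 * c := by
      have h22 : 2 * (g' * y₁) = 4 * c := by rw [← hc, hgg']; ring
      omega
    rcases (Nat.Prime.dvd_mul Nat.prime_two).1 ⟨c, hgy⟩ with h | h
    · exact absurd h hg'odd
    · exact h
  -- x₁ and y₂ are odd
  have hx1y2 : ¬ 2 ∣ x₁ * y₂ := by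
    intro h
    apply hodd
    have h1 : (2:ℤ) ∣ (x₁:ℤ) * (y₂:ℤ) := by exact_mod_cast Int.natCast_dvd_natCast.2 h
    have h2 : (2:ℤ) ∣ (x₂:ℤ) * (y₁:ℤ) := by
      have : (2:ℤ) ∣ (y₁:ℤ) := by exact_mod_cast Int.natCast_dvd_natCast.2 h2y₁
      exact Dvd.dvd.mul_left this _
    exact dvd_sub h1 h2
  have hx₁odd : ¬ 2 ∣ x₁ := fun h => hx1y2 (h.mul_right _)
  have hy₂odd : ¬ 2 ∣ y₂ := fun h => hx1y2 (h.mul_left _)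
  -- quotients
  have hmt : m ∣ t * y₁ := hy.trans (Nat.mul_dvd_mul_right hgt y₁)
  have hmr : m ∣ (r - 1) * y₁ := hy.trans (Nat.mul_dvd_mul_right hgr y₁)
  have hq₁ : (t * y₁ / m) * m = t * y₁ := Nat.div_mul_cancel hmt
  have hq₂ : ((r - 1) * y₁ / m) * m = (r - 1) * y₁ := Nat.div_mul_cancel hmr
  -- decompositions
  obtain ⟨m', hm'⟩ : 2 ^ β₂ ∣ m := hβ1
  have hm'odd : ¬ 2 ∣ m' := by
    rintro ⟨c, rfl⟩
    exact hβ2 ⟨c, by rw [hm']; ring⟩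
  obtain ⟨t', ht'⟩ : 2 ∣ t := by omega
  have ht'odd : ¬ 2 ∣ t' := by omega
  obtain ⟨s, hs⟩ : 2 ∣ r - 1 := by omega
  have hsodd : ¬ 2 ∣ s := by omega
  -- parity equivalences
  have hE1 : 2 ∣ t * y₁ / m ↔ 2 ^ β₂ ∣ y₁ := by
    apply par_lemma β₂ m' t' y₁ _ hm'odd ht'odd
    rw [← hm', hq₁, ht']; ring
  have hE2 : 2 ∣ (r - 1) * y₁ / m ↔ 2 ^ β₂ ∣ y₁ := by
    apply par_lemma β₂ m' s y₁ _ hm'odd hsodd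
    rw [← hm', hq₂, hs]; ring
  -- ZMod 4 values
  have hrz : ((r : ℕ) : ZMod 4) = 3 := by
    rw [← ZMod.natCast_mod, hr4]; rfl
  have htz : ((t : ℕ) : ZMod 4) = 2 := by
    rw [← ZMod.natCast_mod, ht4]; rfl
  have hpy1 : ((r : ZMod 4)) ^ y₁ = 1 := by
    obtain ⟨c, rfl⟩ := h2y₁
    rw [hrz, pow_mul, show (3 : ZMod 4) ^ 2 = 1 by decide, one_pow]
  have hpy2 : ((r : ZMod 4)) ^ y₂ = 3 := by
    obtain ⟨c, hc⟩ : ∃ c, y₂ = 2 * c + 1 := ⟨y₂ / 2, by omega⟩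
    rw [hc, hrz, pow_succ, pow_mul, show (3 : ZMod 4) ^ 2 = 1 by decide, one_pow, one_mul]
  -- sums
  have hS1 : (∑ i ∈ Finset.range m, ((r : ZMod 4) ^ y₂) ^ i) = 0 := by
    obtain ⟨j, hj⟩ : ∃ j, m = 2 * j := ⟨m / 2, by omega⟩
    rw [hpy2, hj, geom_pair 3 (by decide) j, show (1 + 3 : ZMod 4) = 0 by decide, mul_zero]
  have hS2 : (∑ i ∈ Finset.range t, ((r : ZMod 4) ^ y₁) ^ i) = 2 := by
    rw [hpy1]
    simp [htz]
  have hS3 : (∑ i ∈ Finset.range r, ((r : ZMod 4) ^ y₁) ^ i) = 3 := by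
    rw [hpy1]
    simp [hrz]
  -- products with odd factors
  have e1 : (2 : ZMod 4) * (y₂ : ℕ) = 2 := by
    rw [show (2 : ZMod 4) = ((2:ℕ) : ZMod 4) from rfl, ← Nat.cast_mul,
      ← ZMod.natCast_mod, show 2 * y₂ % 4 = 2 by omega]
  have e2 : ((x₁ : ℕ) : ZMod 4) * 2 = 2 := by
    rw [show (2 : ZMod 4) = ((2:ℕ) : ZMod 4) from rfl, ← Nat.cast_mul,
      ← ZMod.natCast_mod, show x₁ * 2 % 4 = 2 by omega]
  have key : ∀ q : ℕ, (((q : ℕ) : ZMod 4) * 2 = 0) ↔ 2 ∣ q := by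
    intro q
    rw [show (2 : ZMod 4) = ((2:ℕ) : ZMod 4) from rfl, ← Nat.cast_mul, ← ZMod.natCast_mod]
    constructor
    · intro h
      by_contra hq
      rw [show q * 2 % 4 = 2 by omega] at h
      exact absurd h (by decide)
    · intro hq
      rw [show q * 2 % 4 = 0 by omega]
      exact Nat.cast_zero
  -- main congruence equivalences
  set q₁ := t * y₁ / m with hq₁def
  set q₂ := (r - 1) * y₁ / m with hq₂def
  rw [zmod4_iff, zmod4_iff]
  push_cast
  rw [geomS_cast, geomS_cast, geomS_cast, hS1, hS2, hS3, hpy1, hpy2, htz]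
  constructor
  · rintro ⟨h1, _⟩
    rw [← hE1, ← key q₁]
    rw [e1, e2, mul_zero] at h1
    linear_combination -h1
  · intro hd
    have k1 : ((q₁ : ℕ) : ZMod 4) * 2 = 0 := (key q₁).2 (hE1.2 hd)
    have k2 : ((q₂ : ℕ) : ZMod 4) * 2 = 0 := (key q₂).2 (hE2.2 hd)
    constructor
    · rw [e1, e2, mul_zero]
      linear_combination -k1
    · linear_combination k2
end
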